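/- arXiv:1311.0138 — 6 statements merged into one kernel-verified Lean document; each statement's English description precedes it below -/
import Mathlib

section
/- The function β(n) = min{ℓ(w) : w ∈ F₂^{(n)}, w ≠ e} satisfies β(n+m) ≤ β(n)·β(m) for all n, m; more precisely, substituting the shortest nontrivial element of F₂^{(n)} (as a word in two free generators) into a free pair of elements of F₂^{(m)} of length β(m) yields a nontrivial element of F₂^{(n+m)} of length at most β(n)·β(m). -/
set_option linter.unusedSectionVars false
set_option maxHeartbeats 1000000
set_option linter.unreachableTactic false
set_option linter.unusedTactic false

open FreeGroup List Subgroup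

namespace BetaAux

variable {α : Type*} [DecidableEq α]

/-! ### Reduced words as chains -/

/-- Inverse of a letter. -/
def invL (a : α × Bool) : α × Bool := (a.1, !a.2)

@[simp] lemma invL_invL (a : α × Bool) : invL (invL a) = a := by
  simp [invL]

lemma invL_injective : Function.Injective (invL (α := α)) :=
  Function.Involutive.injective invL_invL

/-- No-cancellation relation between consecutive letters. -/
def Rl (a b : α × Bool) : Prop := b ≠ invL a

lemma cancel_iff (a b : α × Bool) : (a.1 = b.1 ∧ a.2 = !b.2) ↔ b = invL a := by
  rcases a with ⟨x, s⟩; rcases b with ⟨y, t⟩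
  simp only [invL, Prod.mk.injEq, Prod.ext_iff]
  cases s <;> cases t <;> simp [eq_comm]

lemma ne_invL_symm {a b : α × Bool} (h : a ≠ invL b) : b ≠ invL a := by
  intro hc
  exact h (by rw [hc, invL_invL])

lemma chain'_reduce (L : List (α × Bool)) : List.IsChain Rl (reduce L) := by
  induction L with
  | nil => simp
  | cons a L ih =>
    rw [reduce.cons]
    rcases h : reduce L with _ | ⟨b, t⟩
    · simp
    · rw [h] at ih
      by_cases hc : a.1 = b.1 ∧ a.2 = !b.2
      · simpa [hc] using ih.tail
      · simp only [hc, if_false]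
        refine List.IsChain.cons_cons ?_ ih
        exact fun hb => hc ((cancel_iff a b).2 hb)

lemma reduce_eq_self_of_chain' {L : List (α × Bool)} (h : List.IsChain Rl L) :
    reduce L = L := by
  induction L with
  | nil => simp
  | cons a L ih =>
    have hL : reduce L = L := ih h.tail
    rw [reduce.cons, hL]
    rcases L with _ | ⟨b, t⟩
    · rfl
    · have hab : Rl a b := List.isChain_cons_cons.1 h |>.1
      have : ¬(a.1 = b.1 ∧ a.2 = !b.2) := fun hc => hab ((cancel_iff a b).1 hc)
      simp [this]

lemma toWord_chain' (x : FreeGroup α) : List.IsChain Rl x.toWord := by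
  rw [← reduce_toWord]; exact chain'_reduce _

lemma toWord_mk_of_chain' {L : List (α × Bool)} (h : List.IsChain Rl L) :
    (mk L).toWord = L := by
  rw [toWord_mk, reduce_eq_self_of_chain' h]

lemma norm_mk_of_chain' {L : List (α × Bool)} (h : List.IsChain Rl L) :
    (mk L).norm = L.length := by
  rw [FreeGroup.norm, toWord_mk_of_chain' h]

/-! ### invRev facts -/

lemma invRev_eq (L : List (α × Bool)) : invRev L = (L.map invL).reverse := rfl

lemma chain'_invRev {L : List (α × Bool)} (h : List.IsChain Rl L) :
    List.IsChain Rl (invRev L) := by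
  rw [invRev_eq, List.isChain_reverse]
  refine List.isChain_map_of_isChain invL ?_ h
  intro a b hab hba
  apply hab
  rw [invL_invL] at hba
  exact hba.symm

lemma head?_invRev (L : List (α × Bool)) :
    (invRev L).head? = L.getLast?.map invL := by
  rw [invRev_eq, List.head?_reverse, List.getLast?_map]

lemma getLast?_invRev (L : List (α × Bool)) :
    (invRev L).getLast? = L.head?.map invL := by
  rw [invRev_eq, List.getLast?_reverse, List.head?_map]

lemma invRev_ne_nil {L : List (α × Bool)} (h : L ≠ []) : invRev L ≠ [] := by
  intro hc
  apply h
  have := congrArg List.length hc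
  rw [invRev_length] at this
  exact List.length_eq_zero_iff.1 this

/-! ### Letter-map endomorphisms -/

/-- Homomorphism induced by a letter map commuting with inversion. -/
noncomputable def letterHom (h : α × Bool → α × Bool) : FreeGroup α →* FreeGroup α :=
  FreeGroup.lift (fun i => mk [h (i, true)])

lemma letterHom_mk (h : α × Bool → α × Bool) (hinv : ∀ a, h (invL a) = invL (h a))
    (L : List (α × Bool)) : letterHom h (mk L) = mk (L.map h) := by
  induction L with
  | nil => simp [← one_eq_mk]
  | cons a L ih =>
    have h1 : mk (a :: L) = mk [a] * mk L := by rw [mul_mk]; rfl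
    rw [h1, MonoidHom.map_mul, ih]
    have hsingle : letterHom h (mk [a]) = mk [h a] := by
      rcases a with ⟨x, s⟩
      cases s
      · have hofinv : ((FreeGroup.of x)⁻¹ : FreeGroup α) = mk [(x, false)] := by
          rw [show ([(x, false)] : List (α × Bool)) = invRev [(x, true)] from rfl, ← inv_mk]
          rfl
        rw [← hofinv, MonoidHom.map_inv]
        have h3 : letterHom h (of x) = mk [h (x, true)] := FreeGroup.lift_apply_of
        rw [h3, inv_mk]
        have h2 : invRev [h (x, true)] = [invL (h (x, true))] := rfl
        rw [h2, ← hinv (x, true)]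
        rfl
      · exact FreeGroup.lift_apply_of
    rw [hsingle, mul_mk]
    rfl

/-! ### Derived series facts -/

lemma map_subtype_derivedSeries_le {G : Type*} [Group G] (K : Subgroup G) {n : ℕ}
    (hK : K ≤ derivedSeries G n) :
    ∀ m : ℕ, (derivedSeries K m).map K.subtype ≤ derivedSeries G (n + m)
  | 0 => by
    rw [derivedSeries_zero, ← MonoidHom.range_eq_map, K.range_subtype, Nat.add_zero]
    exact hK
  | m + 1 => by
    have ih := map_subtype_derivedSeries_le K hK m
    rw [derivedSeries_succ, Subgroup.map_commutator, ← Nat.add_assoc, derivedSeries_succ]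
    exact Subgroup.commutator_mono ih ih

lemma lift_mem_derivedSeries {n m : ℕ} (f : Fin 2 → FreeGroup (Fin 2))
    (hf : ∀ i, f i ∈ derivedSeries (FreeGroup (Fin 2)) n)
    {u : FreeGroup (Fin 2)} (hu : u ∈ derivedSeries (FreeGroup (Fin 2)) m) :
    FreeGroup.lift f u ∈ derivedSeries (FreeGroup (Fin 2)) (n + m) := by
  set K := derivedSeries (FreeGroup (Fin 2)) n
  set g : Fin 2 → K := fun i => ⟨f i, hf i⟩ with hg
  have hcomp : K.subtype.comp (FreeGroup.lift g) = FreeGroup.lift f := by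
    apply FreeGroup.ext_hom
    intro a
    simp [hg]
  have h1 : FreeGroup.lift g u ∈ derivedSeries K m :=
    map_derivedSeries_le_derivedSeries (FreeGroup.lift g) m ⟨u, hu, rfl⟩
  have h2 : K.subtype (FreeGroup.lift g u) ∈ derivedSeries (FreeGroup (Fin 2)) (n + m) :=
    map_subtype_derivedSeries_le K le_rfl m ⟨_, h1, rfl⟩
  rwa [← hcomp]

lemma freeGroup_not_solvable : ¬ Group.IsSolvable (FreeGroup (Fin 2)) := by
  intro hsol
  set σ : Equiv.Perm (Fin 5) := finRotate 5 with hσ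
  have h1 : σ.IsCycle := isCycle_finRotate (n := 3)
  have h2 : σ.support = Finset.univ := support_finRotate (n := 3)
  set τ : Equiv.Perm (Fin 5) := Equiv.swap 0 (σ 0) with hτ
  set f : Fin 2 → Equiv.Perm (Fin 5) := fun i => if i = 0 then σ else τ with hf
  have hrange : (FreeGroup.lift f).range = ⊤ := by
    rw [FreeGroup.range_lift_eq_closure, eq_top_iff,
      ← Equiv.Perm.closure_cycle_adjacent_swap h1 h2 0]
    apply Subgroup.closure_mono
    intro x hx
    rcases hx with h | h
    · exact ⟨0, by simp [hf, h]⟩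
    · exact ⟨1, by simp only [Set.mem_singleton_iff] at h; simp [hf, h, hτ]⟩
  have hsurj : Function.Surjective (FreeGroup.lift f) :=
    MonoidHom.range_eq_top.1 hrange
  exact Equiv.Perm.fin_5_not_solvable (solvable_of_surjective hsurj)

lemma exists_ne_one_derivedSeries (n : ℕ) :
    ∃ w ∈ derivedSeries (FreeGroup (Fin 2)) n, w ≠ 1 := by
  by_contra hc
  push_neg at hc
  have hbot : derivedSeries (FreeGroup (Fin 2)) n = ⊥ := by
    rw [eq_bot_iff_forall]
    exact hc
  exact freeGroup_not_solvable ⟨⟨n, hbot⟩⟩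

/-! ### The substitution homomorphism on words -/

/-- The block of letters substituted for a single letter. -/
def blk (sel : Fin 2 → List (α × Bool)) (t : Fin 2 × Bool) : List (α × Bool) :=
  cond t.2 (sel t.1) (invRev (sel t.1))

lemma lift_mk_flatten (sel : Fin 2 → List (α × Bool)) (L : List (Fin 2 × Bool)) :
    FreeGroup.lift (fun i => mk (sel i)) (mk L) = mk ((L.map (blk sel)).flatten) := by
  induction L with
  | nil =>
    show FreeGroup.lift _ (mk []) = _
    rw [← one_eq_mk]
    simp [← one_eq_mk]
  | cons t L ih =>
    have h1 : mk (t :: L) = mk [t] * mk L := by rw [mul_mk]; rfl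
    rw [h1, MonoidHom.map_mul, ih]
    have hsingle : FreeGroup.lift (fun i => mk (sel i)) (mk [t]) = mk (blk sel t) := by
      rcases t with ⟨i, s⟩
      cases s
      · have hofinv : ((FreeGroup.of i)⁻¹ : FreeGroup (Fin 2)) = mk [(i, false)] := by
          rw [show ([(i, false)] : List (Fin 2 × Bool)) = invRev [(i, true)] from rfl, ← inv_mk]
          rfl
        rw [← hofinv, MonoidHom.map_inv, FreeGroup.lift_apply_of, inv_mk]
        rfl
      · exact FreeGroup.lift_apply_of
    rw [hsingle, mul_mk]
    simp [List.flatten]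

lemma chain'_flatten_blocks (sel : Fin 2 → List (α × Bool))
    (hne : ∀ i, sel i ≠ []) (hch : ∀ i, List.IsChain Rl (sel i))
    (hj : ∀ s t : Fin 2 × Bool, Rl s t →
      ∀ x ∈ (blk sel s).getLast?, ∀ y ∈ (blk sel t).head?, Rl x y)
    {L : List (Fin 2 × Bool)} (hL : List.IsChain Rl L) :
    List.IsChain Rl ((L.map (blk sel)).flatten) := by
  have hblk_ne : ∀ t, blk sel t ≠ [] := by
    intro t
    rcases t with ⟨i, s⟩
    cases s
    · exact invRev_ne_nil (hne i)
    · exact hne i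
  have hnil : [] ∉ L.map (blk sel) := by
    intro hc
    rcases List.mem_map.1 hc with ⟨t, _, ht⟩
    exact hblk_ne t ht
  rw [List.isChain_flatten hnil]
  constructor
  · intro l hl
    rcases List.mem_map.1 hl with ⟨t, _, ht⟩
    subst ht
    rcases t with ⟨i, s⟩
    cases s
    · exact chain'_invRev (hch i)
    · exact hch i
  · refine List.isChain_map_of_isChain (blk sel) ?_ hL
    intro s t hst
    exact hj s t hst

end BetaAux

/-- `β n` is the minimal word length of a nontrivial element of the `n`-th derived
subgroup of the free group on two generators. -/
noncomputable def betaGirth (n : ℕ) : ℕ :=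
  sInf {k | ∃ w ∈ derivedSeries (FreeGroup (Fin 2)) n, w ≠ 1 ∧ w.norm = k}

theorem betaGirth_submultiplicative (n m : ℕ) :
    betaGirth (n + m) ≤ betaGirth n * betaGirth m := by
  classical
  open BetaAux in
  -- nonemptiness of the defining sets
  have hSn : {k | ∃ w ∈ derivedSeries (FreeGroup (Fin 2)) n, w ≠ 1 ∧ w.norm = k}.Nonempty := by
    obtain ⟨w, hw, hw1⟩ := exists_ne_one_derivedSeries n
    exact ⟨w.norm, w, hw, hw1, rfl⟩
  have hSm : {k | ∃ w ∈ derivedSeries (FreeGroup (Fin 2)) m, w ≠ 1 ∧ w.norm = k}.Nonempty := by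
    obtain ⟨w, hw, hw1⟩ := exists_ne_one_derivedSeries m
    exact ⟨w.norm, w, hw, hw1, rfl⟩
  obtain ⟨a, haK, ha1, hanorm⟩ :
      ∃ w ∈ derivedSeries (FreeGroup (Fin 2)) n, w ≠ 1 ∧ w.norm = betaGirth n :=
    Nat.sInf_mem hSn
  obtain ⟨u, huK, hu1, hunorm⟩ :
      ∃ w ∈ derivedSeries (FreeGroup (Fin 2)) m, w ≠ 1 ∧ w.norm = betaGirth m :=
    Nat.sInf_mem hSm
  have hmin : ∀ v ∈ derivedSeries (FreeGroup (Fin 2)) n, v ≠ 1 → betaGirth n ≤ v.norm :=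
    fun v hv hv1 => Nat.sInf_le ⟨v, hv, hv1, rfl⟩
  set la : List (Fin 2 × Bool) := a.toWord with hla
  have hla_chain : List.IsChain Rl la := toWord_chain' a
  have hla_ne : la ≠ [] := by
    rw [hla]
    exact fun hc => ha1 (FreeGroup.toWord_eq_nil_iff.1 hc)
  obtain ⟨p, hd_la⟩ : ∃ p, la.head? = some p := ⟨_, List.head?_eq_head hla_ne⟩
  obtain ⟨q, gl_la⟩ : ∃ q, la.getLast? = some q := ⟨_, List.getLast?_eq_getLast hla_ne⟩
  have hlalen : la.length = betaGirth n := hanorm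
  -- `a` is cyclically reduced by minimality
  have hcyc : p ≠ invL q := by
    intro hpq
    obtain ⟨l', q0, hconcat⟩ : ∃ l' a0, la = l' ++ [a0] := by
      rcases List.eq_nil_or_concat la with hnil | ⟨l', a0, hc⟩
      · exact absurd hnil hla_ne
      · exact ⟨l', a0, by simpa using hc⟩
    have hq0 : q0 = q := by
      have := gl_la
      rw [hconcat, List.getLast?_concat] at this
      exact Option.some_inj.mp this
    subst hq0
    rcases l' with _ | ⟨p0, mid⟩
    · -- la = [q], impossible since p = invL q
      have hpq0 : p = q0 := by
        have := hd_la
        rw [hconcat] at this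
        simpa using this.symm
      rw [hpq0] at hpq
      have := congrArg Prod.snd hpq
      simp [invL] at this
    · have hp0 : p0 = p := by
        have := hd_la
        rw [hconcat] at this
        simpa using this
      subst hp0
      have hqinv : (q0 : Fin 2 × Bool) = invL p0 := by rw [hpq, invL_invL]
      set c : FreeGroup (Fin 2) := FreeGroup.mk [p0] with hcdef
      have hcq : FreeGroup.mk [q0] = c⁻¹ := by
        rw [hcdef, inv_mk, hqinv]
        rfl
      have hlist : la = ([p0] ++ mid) ++ [q0] := by simpa using hconcat
      have ha_eq : a = c * FreeGroup.mk mid * c⁻¹ := by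
        rw [← hcq, hcdef, mul_mk, mul_mk, ← hlist]
        exact (FreeGroup.mk_toWord).symm
      set w0 : FreeGroup (Fin 2) := FreeGroup.mk mid with hw0
      have hw0_mem : w0 ∈ derivedSeries (FreeGroup (Fin 2)) n := by
        have hconj : w0 = c⁻¹ * a * (c⁻¹)⁻¹ := by
          rw [ha_eq]
          group
        rw [hconj]
        exact (derivedSeries_normal _ n).conj_mem a haK c⁻¹
      have hw0_ne : w0 ≠ 1 := by
        intro hw0_one
        apply ha1
        rw [ha_eq, hw0_one]
        group
      have hlen : mid.length + 2 = la.length := by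
        rw [hconcat]
        simp
      have h1 : betaGirth n ≤ w0.norm := hmin w0 hw0_mem hw0_ne
      have h2 : w0.norm ≤ mid.length := FreeGroup.norm_mk_le
      omega
  have hcyc' : q ≠ invL p := ne_invL_symm hcyc
  -- choose the letter map
  have hpkg : ∃ h : Fin 2 × Bool → Fin 2 × Bool,
      (∀ t, h (invL t) = invL (h t)) ∧ Function.Injective h ∧
      h p ≠ p ∧ h p ≠ invL q ∧ h q ≠ q ∧ p ≠ invL (h q) := by
    by_cases hgen : p.1 = q.1
    · refine ⟨fun t => (t.1 + 1, t.2), fun t => rfl, ?_, ?_, ?_, ?_, ?_⟩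
      · intro s t hst
        have h1 := congrArg Prod.fst hst
        have h2 := congrArg Prod.snd hst
        simp only at h1 h2
        have : s.1 = t.1 := by
          have : ∀ z w : Fin 2, z + 1 = w + 1 → z = w := by decide
          exact this _ _ h1
        exact Prod.ext this h2
      · intro hc
        have := congrArg Prod.fst hc
        simp only at this
        exact (by decide : ∀ z : Fin 2, ¬ z + 1 = z) p.1 this
      · intro hc
        have := congrArg Prod.fst hc
        simp only [invL] at this
        rw [hgen] at this
        exact (by decide : ∀ z : Fin 2, ¬ z + 1 = z) q.1 this
      · intro hc
        have := congrArg Prod.fst hc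
        simp only at this
        exact (by decide : ∀ z : Fin 2, ¬ z + 1 = z) q.1 this
      · intro hc
        have := congrArg Prod.fst hc
        simp only [invL] at this
        rw [hgen] at this
        exact (by decide : ∀ z : Fin 2, ¬ z = z + 1) q.1 this
    · refine ⟨invL, fun t => rfl, invL_injective, ?_, ?_, ?_, ?_⟩
      · intro hc
        have := congrArg Prod.snd hc
        simp [invL] at this
      · intro hc
        have := congrArg Prod.fst hc
        simp only [invL] at this
        exact hgen this
      · intro hc
        have := congrArg Prod.snd hc
        simp [invL] at this
      · intro hc
        rw [invL_invL] at hc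
        have := congrArg Prod.fst hc
        exact hgen this
  obtain ⟨h, hinv, hinj, c3, c4, c5, c6⟩ := hpkg
  have c2 : h p ≠ invL (h q) := by
    intro hc
    rw [← hinv q] at hc
    exact hcyc (hinj hc)
  -- the companion element b
  set lb : List (Fin 2 × Bool) := la.map h with hlb
  set b : FreeGroup (Fin 2) := FreeGroup.mk lb with hb
  have hlb_chain : List.IsChain Rl lb := by
    refine List.isChain_map_of_isChain h ?_ hla_chain
    intro s t hst hc
    apply hst
    rw [← hinv s] at hc
    exact hinj hc
  have hb_eq : BetaAux.letterHom h a = b := by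
    conv_lhs => rw [← FreeGroup.mk_toWord (x := a)]
    rw [letterHom_mk h hinv]
  have hb_mem : b ∈ derivedSeries (FreeGroup (Fin 2)) n := by
    rw [← hb_eq]
    exact map_derivedSeries_le_derivedSeries (BetaAux.letterHom h) n ⟨a, haK, rfl⟩
  have hlb_ne : lb ≠ [] := by
    rw [hlb]
    simpa using hla_ne
  have hlb_len : lb.length = la.length := by
    rw [hlb, List.length_map]
  -- head? / getLast? facts
  have hd_lb : lb.head? = some (h p) := by
    rw [hlb, List.head?_map, hd_la]
    rfl
  have gl_lb : lb.getLast? = some (h q) := by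
    rw [hlb, List.getLast?_map, gl_la]
    rfl
  have hd_ila : (invRev la).head? = some (invL q) := by
    rw [head?_invRev, gl_la]; rfl
  have gl_ila : (invRev la).getLast? = some (invL p) := by
    rw [getLast?_invRev, hd_la]; rfl
  have hd_ilb : (invRev lb).head? = some (invL (h q)) := by
    rw [head?_invRev, gl_lb]; rfl
  have gl_ilb : (invRev lb).getLast? = some (invL (h p)) := by
    rw [getLast?_invRev, hd_lb]; rfl
  -- the substitution data
  set sel : Fin 2 → List (Fin 2 × Bool) := ![la, lb] with hsel
  have hsel0 : sel 0 = la := rfl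
  have hsel1 : sel 1 = lb := rfl
  have hne : ∀ i, sel i ≠ [] := by
    intro i
    fin_cases i
    · exact hla_ne
    · exact hlb_ne
  have hch : ∀ i, List.IsChain Rl (sel i) := by
    intro i
    fin_cases i
    · exact hla_chain
    · exact hlb_chain
  -- junction conditions
  have hj : ∀ s t : Fin 2 × Bool, Rl s t →
      ∀ x ∈ (blk sel s).getLast?, ∀ y ∈ (blk sel t).head?, Rl x y := by
    rintro ⟨i, si⟩ ⟨j, sj⟩ hst x hx y hy
    fin_cases i <;> fin_cases j <;> cases si <;> cases sj <;>
      simp only [blk, cond_true, cond_false, hsel0, hsel1, Fin.mk_zero, Fin.mk_one,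
        Fin.isValue, Matrix.cons_val_zero, Matrix.cons_val_one, Matrix.head_cons,
        hd_la, gl_la, hd_lb, gl_lb, hd_ila, gl_ila, hd_ilb, gl_ilb,
        Option.mem_def, Option.some.injEq] at hx hy <;>
      subst hx <;> subst hy <;>
      (try exact absurd rfl hst) <;>
      (show Rl _ _) <;>
      simp only [Rl, ne_eq, invL_invL] <;>
      intro hc
    -- the remaining goals: dispatch each to one of the inequalities
    all_goals first
      | exact hcyc hc
      | exact hcyc hc.symm
      | exact hcyc' hc
      | exact hcyc' hc.symm
      | exact c2 hc
      | exact c2 hc.symm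
      | exact c3 hc
      | exact c3 hc.symm
      | exact c4 hc
      | exact c4 hc.symm
      | exact c5 hc
      | exact c5 hc.symm
      | exact c6 hc
      | exact c6 hc.symm
      | exact c5 (invL_injective hc)
      | exact c5 (invL_injective hc.symm)
      | exact c5 (invL_injective hc).symm
      | exact c5 (invL_injective hc.symm).symm
      | exact hcyc (invL_injective hc)
      | exact hcyc (invL_injective hc.symm)
      | exact hcyc' (invL_injective hc)
      | exact hcyc' (invL_injective hc.symm)
      | exact c2 (invL_injective hc)
      | exact c2 (invL_injective hc.symm)
      | exact c4 (invL_injective hc)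
      | exact c4 (invL_injective hc.symm)
      | exact c6 (invL_injective hc)
      | exact c6 (invL_injective hc.symm)
      | exact c3 (invL_injective hc)
      | exact c3 (invL_injective hc.symm)
  -- the substituted element
  set Lu : List (Fin 2 × Bool) := u.toWord with hLu
  have hLu_chain : List.IsChain Rl Lu := toWord_chain' u
  have hLu_ne : Lu ≠ [] := fun hc => hu1 (FreeGroup.toWord_eq_nil_iff.1 hc)
  set flat : List (Fin 2 × Bool) := (Lu.map (blk sel)).flatten with hflat
  have hflat_chain : List.IsChain Rl flat := chain'_flatten_blocks sel hne hch hj hLu_chain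
  set v : FreeGroup (Fin 2) := FreeGroup.lift (fun i => FreeGroup.mk (sel i)) u with hv
  have hv_eq : v = FreeGroup.mk flat := by
    rw [hv]
    conv_lhs => rw [← FreeGroup.mk_toWord (x := u)]
    rw [lift_mk_flatten, hflat, hLu]
  have hflat_len : flat.length = Lu.length * la.length := by
    rw [hflat, List.length_flatten, List.map_map]
    have : ∀ t : Fin 2 × Bool, (List.length ∘ blk sel) t = la.length := by
      rintro ⟨i, s⟩
      fin_cases i <;> cases s <;>
        simp [blk, hsel0, hsel1, invRev_length, hlb_len]
    rw [funext this, List.map_const', List.sum_replicate, smul_eq_mul, mul_comm]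
  have hLulen : Lu.length = betaGirth m := hunorm
  have hv_norm : v.norm = betaGirth n * betaGirth m := by
    rw [hv_eq, norm_mk_of_chain' hflat_chain, hflat_len, hlalen, hLulen, mul_comm]
  have hv_ne : v ≠ 1 := by
    intro hc
    have : v.norm = 0 := by rw [hc]; exact FreeGroup.norm_one
    rw [hv_norm] at this
    have hn0 : betaGirth n ≠ 0 := by
      intro hz
      rw [hz] at hanorm
      exact ha1 (FreeGroup.norm_eq_zero.1 hanorm)
    have hm0 : betaGirth m ≠ 0 := by
      intro hz
      rw [hz] at hunorm
      exact hu1 (FreeGroup.norm_eq_zero.1 hunorm)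
    exact (Nat.mul_ne_zero hn0 hm0) this
  have hv_mem : v ∈ derivedSeries (FreeGroup (Fin 2)) (n + m) := by
    rw [hv]
    refine lift_mem_derivedSeries _ ?_ huK
    intro i
    fin_cases i
    · show FreeGroup.mk la ∈ _
      rw [hla, FreeGroup.mk_toWord]
      exact haK
    · show FreeGroup.mk lb ∈ _
      rw [← hb]
      exact hb_mem
  calc betaGirth (n + m) ≤ v.norm := Nat.sInf_le ⟨v, hv_mem, hv_ne, rfl⟩
    _ = betaGirth n * betaGirth m := hv_norm
end

section
/- Define recursively in the free group F₂ = ⟨a,b⟩: a₀ = a, b₀ = b, a_{n+1} = [b_n^{-1}, a_n], b_{n+1} = [a_n, b_n]. Then for all n, the products a_n a_n, b_n b_n, a_n^{-1} b_n, b_n^{-1} a_n, a_n b_n^{-1}, b_n a_n^{-1}, a_n^{-1} b_n^{-1}, and b_n a_n involve no cancellation, i.e., the length of each product equals the sum of the lengths of the factors. -/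
open scoped commutatorElement

namespace ABPair

abbrev Letter := Fin 2 × Bool

/-- inverse of a letter -/
def iv (x : Letter) : Letter := (x.1, !x.2)

@[simp] lemma iv_iv (x : Letter) : iv (iv x) = x := by simp [iv]

@[simp] lemma iv_inj {x y : Letter} : iv x = iv y ↔ x = y := by
  simp [iv, Prod.ext_iff]

lemma ne_iv_symm {x y : Letter} (h : x ≠ iv y) : y ≠ iv x := by
  intro he; apply h; rw [he]; simp

/-- compatibility: no cancellation between adjacent letters -/
def compat (u v : Letter) : Prop := ¬(u.1 = v.1 ∧ u.2 = !v.2)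

lemma compat_iff {u v : Letter} : compat u v ↔ u ≠ iv v := by
  simp [compat, iv, Prod.ext_iff]

/-- a reduced word -/
def Rdd (L : List Letter) : Prop := List.Chain' compat L

lemma reduce_eq_self {L : List Letter} (h : Rdd L) : FreeGroup.reduce L = L := by
  induction L with
  | nil => rfl
  | cons x L ih =>
    rw [FreeGroup.reduce.cons, ih h.tail]
    cases L with
    | nil => rfl
    | cons y M =>
      have hxy : compat x y := (List.isChain_cons_cons.mp h).1
      simp only []
      rw [if_neg hxy]

lemma rdd_reduce (L : List Letter) : Rdd (FreeGroup.reduce L) := by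
  induction L with
  | nil => exact List.isChain_nil
  | cons x L ih =>
    rw [FreeGroup.reduce.cons]
    rcases hL : FreeGroup.reduce L with _ | ⟨y, M⟩
    · exact List.isChain_singleton x
    · rw [hL] at ih
      simp only []
      by_cases hc : x.1 = y.1 ∧ x.2 = !y.2
      · rw [if_pos hc]; exact ih.tail
      · rw [if_neg hc]; exact List.isChain_cons_cons.mpr ⟨hc, ih⟩

lemma rdd_toWord (x : FreeGroup (Fin 2)) : Rdd x.toWord := by
  rw [← FreeGroup.reduce_toWord]; exact rdd_reduce _

lemma toWord_mul {x y : FreeGroup (Fin 2)} (h : Rdd (x.toWord ++ y.toWord)) :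
    (x * y).toWord = x.toWord ++ y.toWord := by
  conv_lhs => rw [← FreeGroup.mk_toWord (x := x), ← FreeGroup.mk_toWord (x := y)]
  rw [FreeGroup.mul_mk, FreeGroup.toWord_mk, reduce_eq_self h]

lemma norm_mul_eq {x y : FreeGroup (Fin 2)} (h : Rdd (x.toWord ++ y.toWord)) :
    (x * y).norm = x.norm + y.norm := by
  simp only [FreeGroup.norm, toWord_mul h, List.length_append]

lemma rdd_append' {L M : List Letter} {x y : Letter} (hL : Rdd L) (hM : Rdd M)
    (hx : L.getLast? = some x) (hy : M.head? = some y) (h : compat x y) :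
    Rdd (L ++ M) := by
  refine List.isChain_append.mpr ⟨hL, hM, ?_⟩
  intro u hu v hv
  rw [hx] at hu; rw [hy] at hv
  cases hu; cases hv; exact h

lemma head?_append_left {α : Type*} {L M : List α} {x : α} (h : L.head? = some x) :
    (L ++ M).head? = some x := by
  cases L with
  | nil => simp at h
  | cons a t => simpa using h

lemma getLast?_append_right {α : Type*} {L M : List α} {x : α} (h : M.getLast? = some x) :
    (L ++ M).getLast? = some x := by
  have hM : M ≠ [] := by rintro rfl; simp at h
  rw [List.getLast?_append_of_ne_nil _ hM]; exact h

lemma head?_invRev {L : List Letter} {x : Letter} (h : L.getLast? = some x) :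
    (FreeGroup.invRev L).head? = some (iv x) := by
  unfold FreeGroup.invRev
  rw [List.head?_reverse, List.getLast?_map, h]
  rfl

lemma getLast?_invRev {L : List Letter} {x : Letter} (h : L.head? = some x) :
    (FreeGroup.invRev L).getLast? = some (iv x) := by
  unfold FreeGroup.invRev
  rw [List.getLast?_reverse, List.head?_map, h]
  rfl

lemma head?_inv {x : FreeGroup (Fin 2)} {p : Letter} (h : x.toWord.getLast? = some p) :
    x⁻¹.toWord.head? = some (iv p) := by
  rw [FreeGroup.toWord_inv]; exact head?_invRev h

lemma getLast?_inv {x : FreeGroup (Fin 2)} {p : Letter} (h : x.toWord.head? = some p) :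
    x⁻¹.toWord.getLast? = some (iv p) := by
  rw [FreeGroup.toWord_inv]; exact getLast?_invRev h


/-- The inductive invariant on the pair (a, b). -/
def Inv (a b : FreeGroup (Fin 2)) : Prop :=
  ∃ p q r s : Letter,
    a.toWord.head? = some p ∧ a.toWord.getLast? = some q ∧
    b.toWord.head? = some r ∧ b.toWord.getLast? = some s ∧
    (a * b).toWord.head? = some p ∧ (a * b).toWord.getLast? = some s ∧
    q ≠ iv p ∧ s ≠ iv r ∧ p ≠ r ∧ q ≠ s ∧ s ≠ iv p

lemma inv_step {a b : FreeGroup (Fin 2)} (h : Inv a b) : Inv ⁅b⁻¹, a⁆ ⁅a, b⁆ := by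
  obtain ⟨p, q, r, s, hAh, hAl, hBh, hBl, hWh, hWl, h1, h2, h3, h4, h5⟩ := h
  -- letters of inverses
  have hiAh : a⁻¹.toWord.head? = some (iv q) := head?_inv hAl
  have hiAl : a⁻¹.toWord.getLast? = some (iv p) := getLast?_inv hAh
  have hiBh : b⁻¹.toWord.head? = some (iv s) := head?_inv hBl
  have hiBl : b⁻¹.toWord.getLast? = some (iv r) := getLast?_inv hBh
  -- s1 : a⁻¹ * b⁻¹
  have r1 : Rdd (a⁻¹.toWord ++ b⁻¹.toWord) :=
    rdd_append' (rdd_toWord _) (rdd_toWord _) hiAl hiBh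
      (compat_iff.mpr (by simpa using Ne.symm h5))
  have s1 : (a⁻¹ * b⁻¹).toWord = a⁻¹.toWord ++ b⁻¹.toWord := toWord_mul r1
  have s1h : (a⁻¹ * b⁻¹).toWord.head? = some (iv q) := by rw [s1]; exact head?_append_left hiAh
  have s1l : (a⁻¹ * b⁻¹).toWord.getLast? = some (iv r) := by
    rw [s1]; exact getLast?_append_right hiBl
  -- s2 : b' = [a, b] = (a*b) * (a⁻¹ * b⁻¹)
  have e2 : ⁅a, b⁆ = (a * b) * (a⁻¹ * b⁻¹) := by group
  have r2 : Rdd ((a * b).toWord ++ (a⁻¹ * b⁻¹).toWord) :=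
    rdd_append' (rdd_toWord _) (rdd_toWord _) hWl s1h
      (compat_iff.mpr (by simpa using Ne.symm h4))
  have s2 : ⁅a, b⁆.toWord = (a * b).toWord ++ (a⁻¹ * b⁻¹).toWord := by
    rw [e2]; exact toWord_mul r2
  have s2h : ⁅a, b⁆.toWord.head? = some p := by rw [s2]; exact head?_append_left hWh
  have s2l : ⁅a, b⁆.toWord.getLast? = some (iv r) := by rw [s2]; exact getLast?_append_right s1l
  -- s3 : b⁻¹ * (a * b)
  have r3 : Rdd (b⁻¹.toWord ++ (a * b).toWord) :=
    rdd_append' (rdd_toWord _) (rdd_toWord _) hiBl hWh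
      (compat_iff.mpr (by simpa using (Ne.symm h3)))
  have s3 : (b⁻¹ * (a * b)).toWord = b⁻¹.toWord ++ (a * b).toWord := toWord_mul r3
  have s3h : (b⁻¹ * (a * b)).toWord.head? = some (iv s) := by
    rw [s3]; exact head?_append_left hiBh
  have s3l : (b⁻¹ * (a * b)).toWord.getLast? = some s := by
    rw [s3]; exact getLast?_append_right hWl
  -- s4 : a' = [b⁻¹, a] = (b⁻¹ * (a * b)) * a⁻¹
  have e4 : ⁅b⁻¹, a⁆ = (b⁻¹ * (a * b)) * a⁻¹ := by group
  have r4 : Rdd ((b⁻¹ * (a * b)).toWord ++ a⁻¹.toWord) :=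
    rdd_append' (rdd_toWord _) (rdd_toWord _) s3l hiAh
      (compat_iff.mpr (by simpa using Ne.symm h4))
  have s4 : ⁅b⁻¹, a⁆.toWord = (b⁻¹ * (a * b)).toWord ++ a⁻¹.toWord := by
    rw [e4]; exact toWord_mul r4
  have s4h : ⁅b⁻¹, a⁆.toWord.head? = some (iv s) := by rw [s4]; exact head?_append_left s3h
  have s4l : ⁅b⁻¹, a⁆.toWord.getLast? = some (iv p) := by
    rw [s4]; exact getLast?_append_right hiAl
  -- s5 : b * (a⁻¹ * b⁻¹)
  have r5 : Rdd (b.toWord ++ (a⁻¹ * b⁻¹).toWord) :=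
    rdd_append' (rdd_toWord _) (rdd_toWord _) hBl s1h
      (compat_iff.mpr (by simpa using Ne.symm h4))
  have s5 : (b * (a⁻¹ * b⁻¹)).toWord = b.toWord ++ (a⁻¹ * b⁻¹).toWord := toWord_mul r5
  have s5h : (b * (a⁻¹ * b⁻¹)).toWord.head? = some r := by rw [s5]; exact head?_append_left hBh
  have s5l : (b * (a⁻¹ * b⁻¹)).toWord.getLast? = some (iv r) := by
    rw [s5]; exact getLast?_append_right s1l
  -- s6 : a' * b' = (b⁻¹ * (a * b)) * (b * (a⁻¹ * b⁻¹))
  have e6 : ⁅b⁻¹, a⁆ * ⁅a, b⁆ = (b⁻¹ * (a * b)) * (b * (a⁻¹ * b⁻¹)) := by group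
  have r6 : Rdd ((b⁻¹ * (a * b)).toWord ++ (b * (a⁻¹ * b⁻¹)).toWord) :=
    rdd_append' (rdd_toWord _) (rdd_toWord _) s3l s5h (compat_iff.mpr h2)
  have s6 : (⁅b⁻¹, a⁆ * ⁅a, b⁆).toWord
      = (b⁻¹ * (a * b)).toWord ++ (b * (a⁻¹ * b⁻¹)).toWord := by
    rw [e6]; exact toWord_mul r6
  have s6h : (⁅b⁻¹, a⁆ * ⁅a, b⁆).toWord.head? = some (iv s) := by
    rw [s6]; exact head?_append_left s3h
  have s6l : (⁅b⁻¹, a⁆ * ⁅a, b⁆).toWord.getLast? = some (iv r) := by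
    rw [s6]; exact getLast?_append_right s5l
  refine ⟨iv s, iv p, p, iv r, s4h, s4l, s2h, s2l, s6h, s6l, ?_, ?_, ?_, ?_, ?_⟩
  · simpa using Ne.symm h5
  · simpa using Ne.symm h3
  · exact fun he => h5 (by rw [← he]; simp)
  · simpa using h3
  · simpa using Ne.symm h2


lemma inv_base : Inv (FreeGroup.of 0 : FreeGroup (Fin 2)) (FreeGroup.of 1) := by
  have h0 : (FreeGroup.of 0 : FreeGroup (Fin 2)).toWord = [((0 : Fin 2), true)] :=
    FreeGroup.toWord_of 0
  have h1 : (FreeGroup.of 1 : FreeGroup (Fin 2)).toWord = [((1 : Fin 2), true)] :=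
    FreeGroup.toWord_of 1
  have hr : Rdd ((FreeGroup.of 0 : FreeGroup (Fin 2)).toWord ++ (FreeGroup.of 1).toWord) := by
    rw [h0, h1]
    exact List.isChain_cons_cons.mpr ⟨by simp [compat], List.isChain_singleton _⟩
  have hm : (FreeGroup.of 0 * FreeGroup.of 1 : FreeGroup (Fin 2)).toWord
      = [((0 : Fin 2), true), ((1 : Fin 2), true)] := by
    rw [toWord_mul hr, h0, h1]; rfl
  refine ⟨((0 : Fin 2), true), ((0 : Fin 2), true), ((1 : Fin 2), true), ((1 : Fin 2), true),
    ?_, ?_, ?_, ?_, ?_, ?_, by decide, by decide, by decide, by decide, by decide⟩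
  all_goals simp [h0, h1, hm]

lemma conclusions {a b : FreeGroup (Fin 2)} (h : Inv a b) :
    (a * a).norm = a.norm + a.norm ∧
    (b * b).norm = b.norm + b.norm ∧
    (a⁻¹ * b).norm = a⁻¹.norm + b.norm ∧
    (b⁻¹ * a).norm = b⁻¹.norm + a.norm ∧
    (a * b⁻¹).norm = a.norm + b⁻¹.norm ∧
    (b * a⁻¹).norm = b.norm + a⁻¹.norm ∧
    (a⁻¹ * b⁻¹).norm = a⁻¹.norm + b⁻¹.norm ∧
    (b * a).norm = b.norm + a.norm := by
  obtain ⟨p, q, r, s, hAh, hAl, hBh, hBl, _, _, h1, h2, h3, h4, h5⟩ := h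
  have hiAh : a⁻¹.toWord.head? = some (iv q) := head?_inv hAl
  have hiAl : a⁻¹.toWord.getLast? = some (iv p) := getLast?_inv hAh
  have hiBh : b⁻¹.toWord.head? = some (iv s) := head?_inv hBl
  have hiBl : b⁻¹.toWord.getLast? = some (iv r) := getLast?_inv hBh
  refine ⟨?_, ?_, ?_, ?_, ?_, ?_, ?_, ?_⟩
  · exact norm_mul_eq (rdd_append' (rdd_toWord _) (rdd_toWord _) hAl hAh (compat_iff.mpr h1))
  · exact norm_mul_eq (rdd_append' (rdd_toWord _) (rdd_toWord _) hBl hBh (compat_iff.mpr h2))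
  · exact norm_mul_eq (rdd_append' (rdd_toWord _) (rdd_toWord _) hiAl hBh
      (compat_iff.mpr (by simp [ne_eq, iv_inj]; exact h3)))
  · exact norm_mul_eq (rdd_append' (rdd_toWord _) (rdd_toWord _) hiBl hAh
      (compat_iff.mpr (by simp [ne_eq, iv_inj]; exact h3.symm)))
  · exact norm_mul_eq (rdd_append' (rdd_toWord _) (rdd_toWord _) hAl hiBh
      (compat_iff.mpr (by simpa using h4)))
  · exact norm_mul_eq (rdd_append' (rdd_toWord _) (rdd_toWord _) hBl hiAh
      (compat_iff.mpr (by simpa using h4.symm)))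
  · exact norm_mul_eq (rdd_append' (rdd_toWord _) (rdd_toWord _) hiAl hiBh
      (compat_iff.mpr (by simpa using Ne.symm h5)))
  · exact norm_mul_eq (rdd_append' (rdd_toWord _) (rdd_toWord _) hBl hAh (compat_iff.mpr h5))

end ABPair

/-- `abPair n = (aₙ, bₙ)` with `a₀ = a`, `b₀ = b`, `a_{n+1} = [bₙ⁻¹, aₙ]`,
`b_{n+1} = [aₙ, bₙ]` in the free group on two generators. -/
def abPair : ℕ → FreeGroup (Fin 2) × FreeGroup (Fin 2)
  | 0 => (FreeGroup.of 0, FreeGroup.of 1)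
  | n + 1 => (⁅(abPair n).2⁻¹, (abPair n).1⁆, ⁅(abPair n).1, (abPair n).2⁆)

theorem abPair_no_cancellation (n : ℕ) :
    letI a := (abPair n).1
    letI b := (abPair n).2
    (a * a).norm = a.norm + a.norm ∧
    (b * b).norm = b.norm + b.norm ∧
    (a⁻¹ * b).norm = a⁻¹.norm + b.norm ∧
    (b⁻¹ * a).norm = b⁻¹.norm + a.norm ∧
    (a * b⁻¹).norm = a.norm + b⁻¹.norm ∧
    (b * a⁻¹).norm = b.norm + a⁻¹.norm ∧
    (a⁻¹ * b⁻¹).norm = a⁻¹.norm + b⁻¹.norm ∧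
    (b * a).norm = b.norm + a.norm := by
  have key : ∀ m : ℕ, ABPair.Inv (abPair m).1 (abPair m).2 := by
    intro m
    induction m with
    | zero => exact ABPair.inv_base
    | succ k ih => exact ABPair.inv_step ih
  exact ABPair.conclusions (key n)
end

section
/- With a₀ = a, b₀ = b, a_{n+1} = [b_n^{-1}, a_n], b_{n+1} = [a_n, b_n] in the free group F₂ = ⟨a,b⟩, one has ℓ(a_n) = ℓ(b_n) ≥ 2^n for all n ∈ ℕ. -/
open scoped commutatorElement

open FreeGroup List

abbrev Wd := List (Fin 2 × Bool)

def Rl (x y : Fin 2 × Bool) : Prop := ¬(x.1 = y.1 ∧ x.2 = !y.2)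

instance : DecidableRel Rl := fun x y => inferInstanceAs (Decidable (¬(x.1 = y.1 ∧ x.2 = !y.2)))

/-- A word is reduced iff no adjacent pair cancels. -/
def RedW (w : Wd) : Prop := List.Chain' Rl w

instance : DecidablePred RedW := fun w => inferInstanceAs (Decidable (List.IsChain Rl w))

/-- Junction condition: the last letter of `X` does not cancel the first letter of `Y`. -/
def Jc (X Y : Wd) : Prop := ∀ x y, X.getLast? = some x → Y.head? = some y → Rl x y

instance (X Y : Wd) : Decidable (Jc X Y) :=
  match hX : X.getLast?, hY : Y.head? with
  | some x, some y =>
    if h : Rl x y then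
      .isTrue (fun a b ha hb => by
        rw [hX] at ha; rw [hY] at hb
        injection ha with ha; injection hb with hb; subst ha; subst hb; exact h)
    else .isFalse (fun H => h (H x y hX hY))
  | some _, none => .isTrue (fun a b _ hb => by rw [hY] at hb; cases hb)
  | none, _ => .isTrue (fun a b ha _ => by rw [hX] at ha; cases ha)

lemma redW_append {X Y : Wd} (hX : RedW X) (hY : RedW Y) (h : Jc X Y) : RedW (X ++ Y) :=
  List.isChain_append.2
    ⟨hX, hY, fun x hx y hy => h x y (Option.mem_def.mp hx) (Option.mem_def.mp hy)⟩

lemma reduce_eq_self : ∀ {w : Wd}, RedW w → FreeGroup.reduce w = w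
  | [], _ => rfl
  | [_], _ => rfl
  | x :: y :: t, h => by
    have h1 : Rl x y := (List.isChain_cons_cons.mp h).1
    have h2 := reduce_eq_self (List.isChain_cons_cons.mp h).2
    rw [FreeGroup.reduce.cons, h2]
    simp only [List.casesOn]
    rw [if_neg h1]

lemma norm_mk_red {w : Wd} (h : RedW w) : (FreeGroup.mk w).norm = w.length := by
  show (FreeGroup.mk w).toWord.length = w.length
  rw [FreeGroup.toWord_mk, reduce_eq_self h]

def flp (x : Fin 2 × Bool) : Fin 2 × Bool := (x.1, !x.2)

lemma Rl_flp {x y : Fin 2 × Bool} (h : Rl x y) : Rl (flp y) (flp x) := by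
  rcases x with ⟨xa, xb⟩; rcases y with ⟨ya, yb⟩
  cases xb <;> cases yb <;> simp_all [Rl, flp, eq_comm]

lemma redW_invRev {w : Wd} (h : RedW w) : RedW (invRev w) := by
  unfold RedW FreeGroup.invRev List.Chain'
  rw [List.isChain_reverse, List.isChain_map]
  exact h.imp fun {a b} hab => Rl_flp hab

lemma getLast?_invRev (w : Wd) : (invRev w).getLast? = w.head?.map flp := by
  unfold FreeGroup.invRev
  rw [List.getLast?_reverse, List.head?_map]; rfl

lemma head?_invRev (w : Wd) : (invRev w).head? = w.getLast?.map flp := by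
  unfold FreeGroup.invRev
  rw [List.head?_reverse, List.getLast?_map]; rfl

lemma Jc_inv {X Y : Wd} (h : Jc X Y) : Jc (invRev Y) (invRev X) := by
  intro x y hx hy
  rw [getLast?_invRev] at hx; rw [head?_invRev] at hy
  rcases Option.map_eq_some_iff.mp hx with ⟨y₀, hy₀, rfl⟩
  rcases Option.map_eq_some_iff.mp hy with ⟨x₀, hx₀, rfl⟩
  exact Rl_flp (h x₀ y₀ hx₀ hy₀)

lemma Jc_append_left {X Y Z : Wd} (h : Jc Y Z) (hY : Y ≠ []) : Jc (X ++ Y) Z := by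
  intro x y hx hy
  rw [List.getLast?_append_of_ne_nil _ hY] at hx
  exact h x y hx hy

lemma Jc_append_right {X Y Z : Wd} (h : Jc X Y) (hY : Y ≠ []) : Jc X (Y ++ Z) := by
  intro x y hx hy
  rw [List.head?_append_of_ne_nil _ hY] at hy
  exact h x y hx hy

lemma invRev_ne_nil {X : Wd} (h : X ≠ []) : invRev X ≠ [] := fun e =>
  h (by rw [← FreeGroup.invRev_invRev (L₁ := X), e, FreeGroup.invRev_empty])

lemma append_ne_nil_left {X Y : Wd} (h : X ≠ []) : X ++ Y ≠ [] := fun e =>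
  h (List.append_eq_nil_iff.mp e).1

/-- The main invariant: for `n ≥ 1`, `aₙ = P·S` and `bₙ = S⁻¹·Q` with all six relevant
junctions non-cancelling. -/
lemma abPair_key (n : ℕ) : ∃ P Q S : Wd, P ≠ [] ∧ Q ≠ [] ∧ S ≠ [] ∧
    P.length = Q.length ∧ 2 ^ (n + 1) ≤ P.length + S.length ∧
    RedW P ∧ RedW Q ∧ RedW S ∧
    Jc P S ∧ Jc (invRev S) Q ∧ Jc S P ∧ Jc Q (invRev S) ∧ Jc P Q ∧ Jc Q P ∧
    (abPair (n + 1)).1 = FreeGroup.mk (P ++ S) ∧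
    (abPair (n + 1)).2 = FreeGroup.mk (invRev S ++ Q) := by
  induction n with
  | zero =>
    refine ⟨[(1, false), (0, true), (1, true)], [(1, true), (0, false), (1, false)],
      [(0, false)], by decide, by decide, by decide, by decide, by decide,
      by simp [RedW, List.Chain', Rl, List.isChain_cons_cons], by simp [RedW, List.Chain', Rl, List.isChain_cons_cons],
      by simp [RedW, List.Chain', Rl, List.isChain_cons_cons], by decide, by decide, by decide, by decide,
      by decide, by decide, ?_, ?_⟩
    · show ⁅(FreeGroup.of (1 : Fin 2))⁻¹, FreeGroup.of 0⁆ = _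
      simp only [commutatorElement_def, FreeGroup.of, FreeGroup.inv_mk, FreeGroup.mul_mk]
      exact FreeGroup.reduce.exact (by decide)
    · show ⁅(FreeGroup.of (0 : Fin 2)), FreeGroup.of 1⁆ = _
      simp only [commutatorElement_def, FreeGroup.of, FreeGroup.inv_mk, FreeGroup.mul_mk]
      exact FreeGroup.reduce.exact (by decide)
  | succ n ih =>
    obtain ⟨P, Q, S, hPn, hQn, hSn, hlen, hpow, hP, hQ, hS, j1, j2, j3, j4, j5, j6, ha, hb⟩ := ih
    have iPn := invRev_ne_nil hPn
    have iQn := invRev_ne_nil hQn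
    have iSn := invRev_ne_nil hSn
    have hiP := redW_invRev hP
    have hiQ := redW_invRev hQ
    have hiS := redW_invRev hS
    have j2' : Jc (invRev Q) S := by
      have := Jc_inv j2; rwa [FreeGroup.invRev_invRev] at this
    have j4' : Jc S (invRev Q) := by
      have := Jc_inv j4; rwa [FreeGroup.invRev_invRev] at this
    have j1' : Jc (invRev S) (invRev P) := Jc_inv j1
    have j6' : Jc (invRev P) (invRev Q) := Jc_inv j6
    refine ⟨invRev Q ++ (S ++ (P ++ (Q ++ invRev S))),
      Q ++ (invRev S ++ (invRev P ++ (invRev Q ++ S))), invRev P,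
      append_ne_nil_left iQn, append_ne_nil_left hQn, iPn, ?_, ?_, ?_, ?_, hiP,
      ?_, ?_, ?_, ?_, ?_, ?_, ?_, ?_⟩
    · simp only [List.length_append, FreeGroup.invRev_length]
    · have h2 : 2 ^ (n + 2) = 2 ^ (n + 1) + 2 ^ (n + 1) := by ring
      simp only [List.length_append, FreeGroup.invRev_length]
      omega
    · -- RedW P'
      exact redW_append hiQ
        (redW_append hS
          (redW_append hP (redW_append hQ hiS j4) (Jc_append_right j5 hQn))
          (Jc_append_right j3 hPn))
        (Jc_append_right j2' hSn)
    · -- RedW Q'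
      exact redW_append hQ
        (redW_append hiS
          (redW_append hiP (redW_append hiQ hS j2') (Jc_append_right j6' iQn))
          (Jc_append_right j1' iPn))
        (Jc_append_right j4 iSn)
    · -- Jc P' S'
      exact Jc_append_left
        (Jc_append_left
          (Jc_append_left (Jc_append_left j1' iSn) (append_ne_nil_left hQn))
          (append_ne_nil_left hPn))
        (append_ne_nil_left hSn)
    · -- Jc (invRev S') Q'
      rw [FreeGroup.invRev_invRev]
      exact Jc_append_right j5 hQn
    · -- Jc S' P'
      exact Jc_append_right j6' iQn
    · -- Jc Q' (invRev S')
      rw [FreeGroup.invRev_invRev]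
      exact Jc_append_left
        (Jc_append_left
          (Jc_append_left (Jc_append_left j3 hSn) (append_ne_nil_left iQn))
          (append_ne_nil_left iPn))
        (append_ne_nil_left iSn)
    · -- Jc P' Q'
      exact Jc_append_left
        (Jc_append_left
          (Jc_append_left (Jc_append_left (Jc_append_right j2 hQn) iSn)
            (append_ne_nil_left hQn))
          (append_ne_nil_left hPn))
        (append_ne_nil_left hSn)
    · -- Jc Q' P'
      exact Jc_append_left
        (Jc_append_left
          (Jc_append_left (Jc_append_left (Jc_append_right j4' iQn) hSn)
            (append_ne_nil_left iQn))
          (append_ne_nil_left iPn))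
        (append_ne_nil_left iSn)
    · -- a_{n+2}
      show ⁅(abPair (n + 1)).2⁻¹, (abPair (n + 1)).1⁆ = _
      rw [ha, hb]
      simp only [commutatorElement_def, ← FreeGroup.mul_mk, ← FreeGroup.inv_mk]
      group
    · -- b_{n+2}
      show ⁅(abPair (n + 1)).1, (abPair (n + 1)).2⁆ = _
      rw [ha, hb, FreeGroup.invRev_invRev]
      simp only [commutatorElement_def, ← FreeGroup.mul_mk, ← FreeGroup.inv_mk]
      group

theorem abPair_norm_eq_and_ge (n : ℕ) :
    (abPair n).1.norm = (abPair n).2.norm ∧ 2 ^ n ≤ (abPair n).2.norm := by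
  cases n with
  | zero =>
    show (FreeGroup.of (0 : Fin 2)).norm = (FreeGroup.of (1 : Fin 2)).norm ∧
      2 ^ 0 ≤ (FreeGroup.of (1 : Fin 2)).norm
    rw [FreeGroup.norm_of, FreeGroup.norm_of]
    exact ⟨rfl, le_refl 1⟩
  | succ n =>
    obtain ⟨P, Q, S, hPn, hQn, hSn, hlen, hpow, hP, hQ, hS, j1, j2, _, _, _, _, ha, hb⟩ :=
      abPair_key n
    have na : (abPair (n + 1)).1.norm = P.length + S.length := by
      rw [ha, norm_mk_red (redW_append hP hS j1), List.length_append]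
    have nb : (abPair (n + 1)).2.norm = S.length + Q.length := by
      rw [hb, norm_mk_red (redW_append (redW_invRev hS) hQ j2), List.length_append,
        FreeGroup.invRev_length]
    constructor <;> omega
end

section
/- With a₀ = a, b₀ = b, a_{n+1} = [b_n^{-1}, a_n], b_{n+1} = [a_n, b_n] in F₂, one has ℓ(b_n) ≤ 3·ℓ(b_{n-1}) + 2·ℓ(b_{n-2}) for all n ≥ 2. -/
open scoped commutatorElement

namespace ABAux

abbrev Ltr := Fin 2 × Bool

open FreeGroup List

def C (p q : Ltr) : Prop := ¬(p.1 = q.1 ∧ p.2 = !q.2)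

def Rd (L : List Ltr) : Prop := List.Chain' C L

def J (L M : List Ltr) : Prop := ∀ p ∈ L.getLast?, ∀ q ∈ M.head?, C p q

def fl (p : Ltr) : Ltr := (p.1, !p.2)

local notation "σ" => FreeGroup.invRev (α := Fin 2)

lemma rd_reduce {L : List Ltr} (h : Rd L) : FreeGroup.reduce L = L := by
  induction L with
  | nil => rfl
  | cons x L ih =>
    rw [FreeGroup.reduce.cons, ih h.tail]
    cases L with
    | nil => rfl
    | cons hd tl =>
      have : C x hd := List.isChain_cons_cons.mp h |>.1
      simp only [C] at this
      simp [this]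

lemma norm_mk {L : List Ltr} (h : Rd L) : (FreeGroup.mk L).norm = L.length := by
  show (FreeGroup.mk L).toWord.length = L.length
  rw [FreeGroup.toWord_mk, rd_reduce h]

lemma rd_append {L M : List Ltr} (hL : Rd L) (hM : Rd M) (hJ : J L M) : Rd (L ++ M) :=
  List.isChain_append.mpr ⟨hL, hM, hJ⟩

lemma sigma_def (L : List Ltr) : σ L = (L.map fl).reverse := rfl

lemma sigma_ne_nil {L : List Ltr} (h : L ≠ []) : σ L ≠ [] := by
  simp [sigma_def, h]

lemma head?_sigma (L : List Ltr) : (σ L).head? = L.getLast?.map fl := by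
  rw [sigma_def, List.head?_reverse, List.getLast?_map]

lemma getLast?_sigma (L : List Ltr) : (σ L).getLast? = L.head?.map fl := by
  rw [sigma_def, List.getLast?_eq_head?_reverse, List.reverse_reverse, List.head?_map]

lemma C_fl {p q : Ltr} : C (fl q) (fl p) ↔ C p q := by
  obtain ⟨x, b⟩ := p; obtain ⟨y, c⟩ := q
  simp only [C, fl]
  cases b <;> cases c <;> simp [eq_comm]

lemma J_sigma_sigma {L M : List Ltr} : J (σ L) (σ M) ↔ J M L := by
  simp only [J, head?_sigma, getLast?_sigma, Option.mem_def, Option.map_eq_some_iff]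
  constructor
  · intro h p hp q hq
    exact C_fl.mp (h _ ⟨q, hq, rfl⟩ _ ⟨p, hp, rfl⟩)
  · rintro h _ ⟨p, hp, rfl⟩ _ ⟨q, hq, rfl⟩
    exact C_fl.mpr (h _ hq _ hp)

lemma J_append_left {L M N : List Ltr} (h : M ≠ []) : J (L ++ M) N ↔ J M N := by
  simp only [J, List.getLast?_append_of_ne_nil _ h]

lemma J_append_right {L M N : List Ltr} (h : M ≠ []) : J L (M ++ N) ↔ J L M := by
  simp only [J, List.head?_append_of_ne_nil _ h]

lemma rd_sigma {L : List Ltr} (h : Rd L) : Rd (σ L) := by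
  rw [sigma_def, Rd, List.Chain', List.isChain_reverse, List.isChain_map]
  exact List.IsChain.imp (fun a b hab => C_fl.mpr hab) h

/-- The inductive invariant: `T, A, B` nonempty reduced words with the six
junction conditions, so that `aₙ = mk (A ++ σ T)` and `bₙ = mk (T ++ B)` are
given by reduced concatenations. -/
def Inv (T A B : List Ltr) : Prop :=
  T ≠ [] ∧ A ≠ [] ∧ B ≠ [] ∧ Rd T ∧ Rd A ∧ Rd B ∧
  J (σ B) (σ T) ∧ J (σ T) A ∧ J A B ∧ J B T ∧ J T (σ A) ∧ J (σ A) (σ B)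

def stA (T A B : List Ltr) : List Ltr := σ B ++ σ T ++ A ++ B ++ T
def stB (T A B : List Ltr) : List Ltr := B ++ T ++ σ A ++ σ B ++ σ T

lemma step_inv {T A B : List Ltr} (h : Inv T A B) : Inv A (stA T A B) (stB T A B) := by
  obtain ⟨hT, hA, hB, rT, rA, rB, j1, j2, j3, j4, j5, j6⟩ := h
  have hsT := sigma_ne_nil hT
  have hsA := sigma_ne_nil hA
  have hsB := sigma_ne_nil hB
  have jTB : J T B := J_sigma_sigma.mp j1
  refine ⟨hA, ?_, ?_, rA, ?_, ?_, ?_, ?_, ?_, ?_, ?_, ?_⟩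
  · simp [stA, hT]
  · simp [stB, hsT]
  · unfold stA
    rw [List.append_assoc, List.append_assoc, List.append_assoc]
    refine rd_append (rd_sigma rB) ?_ ((J_append_right hsT).mpr j1)
    refine rd_append (rd_sigma rT) ?_ ((J_append_right hA).mpr j2)
    refine rd_append rA ?_ ((J_append_right hB).mpr j3)
    exact rd_append rB rT j4
  · unfold stB
    rw [List.append_assoc, List.append_assoc, List.append_assoc]
    refine rd_append rB ?_ ((J_append_right hT).mpr j4)
    refine rd_append rT ?_ ((J_append_right hsA).mpr j5)
    refine rd_append (rd_sigma rA) ?_ ((J_append_right hsB).mpr j6)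
    exact rd_append (rd_sigma rB) (rd_sigma rT) j1
  · rw [J_sigma_sigma]
    unfold stB
    rw [List.append_assoc, List.append_assoc, List.append_assoc, J_append_right hB]
    exact j3
  · unfold stA
    rw [List.append_assoc, List.append_assoc, List.append_assoc, J_append_right hsB]
    exact j6
  · unfold stA stB
    rw [J_append_left hT, List.append_assoc, List.append_assoc, List.append_assoc,
      J_append_right hB]
    exact jTB
  · unfold stB
    rw [J_append_left hsT]
    exact j2
  · rw [show A = σ (σ A) from (FreeGroup.invRev_invRev).symm, J_sigma_sigma]
    unfold stA
    rw [J_append_left hT]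
    exact j5
  · rw [J_sigma_sigma]
    unfold stA stB
    rw [J_append_left hsT, List.append_assoc, List.append_assoc, List.append_assoc,
      J_append_right hsB]
    exact J_sigma_sigma.mpr j4

lemma step_group_a (T A B : List Ltr) :
    ⁅(FreeGroup.mk (T ++ B))⁻¹, FreeGroup.mk (A ++ σ T)⁆ =
      FreeGroup.mk (stA T A B ++ σ A) := by
  simp only [stA, commutatorElement_def, ← FreeGroup.mul_mk, ← FreeGroup.inv_mk]
  group

lemma step_group_b (T A B : List Ltr) :
    ⁅FreeGroup.mk (A ++ σ T), FreeGroup.mk (T ++ B)⁆ =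
      FreeGroup.mk (A ++ stB T A B) := by
  simp only [stB, commutatorElement_def, ← FreeGroup.mul_mk, ← FreeGroup.inv_mk]
  group

def T1 : List Ltr := [(0, true)]
def A1 : List Ltr := [(1, false), (0, true), (1, true)]
def B1 : List Ltr := [(1, true), (0, false), (1, false)]

instance : DecidableRel C := fun p q => inferInstanceAs (Decidable ¬(p.1 = q.1 ∧ p.2 = !q.2))

instance (L : List Ltr) : Decidable (Rd L) := inferInstanceAs (Decidable (List.IsChain C L))

instance (L M : List Ltr) : Decidable (J L M) :=
  inferInstanceAs (Decidable (∀ p ∈ L.getLast?, ∀ q ∈ M.head?, C p q))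

lemma rd_cons {p q : Ltr} {L : List Ltr} (h : C p q) (h2 : Rd (q :: L)) :
    Rd (p :: q :: L) := List.isChain_cons_cons.mpr ⟨h, h2⟩

lemma rd_singleton (p : Ltr) : Rd [p] := List.isChain_singleton p

lemma base_inv : Inv T1 A1 B1 := by
  refine ⟨by decide, by decide, by decide, rd_singleton _, ?_, ?_,
    by decide, by decide, by decide, by decide, by decide, by decide⟩ <;>
  · exact rd_cons (by decide) (rd_cons (by decide) (rd_singleton _))

lemma base_rep : abPair 1 = (FreeGroup.mk (A1 ++ σ T1), FreeGroup.mk (T1 ++ B1)) := by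
  show (⁅(FreeGroup.of 1)⁻¹, FreeGroup.of 0⁆, ⁅FreeGroup.of 0, FreeGroup.of 1⁆) = _
  simp only [commutatorElement_def, FreeGroup.of, FreeGroup.mul_mk, FreeGroup.inv_mk,
    T1, A1, B1]
  rfl

lemma rep (n : ℕ) : ∃ T A B : List Ltr, Inv T A B ∧
    abPair (n + 1) = (FreeGroup.mk (A ++ σ T), FreeGroup.mk (T ++ B)) := by
  induction n with
  | zero => exact ⟨T1, A1, B1, base_inv, base_rep⟩
  | succ n ih =>
    obtain ⟨T, A, B, hInv, hrep⟩ := ih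
    refine ⟨A, stA T A B, stB T A B, step_inv hInv, ?_⟩
    show (⁅(abPair (n+1)).2⁻¹, (abPair (n+1)).1⁆, ⁅(abPair (n+1)).1, (abPair (n+1)).2⁆) = _
    rw [hrep]
    exact Prod.ext (step_group_a T A B) (step_group_b T A B)

lemma norm_b {T A B : List Ltr} (h : Inv T A B) :
    (FreeGroup.mk (T ++ B)).norm = T.length + B.length := by
  obtain ⟨_, _, _, rT, _, rB, j1, _⟩ := h
  rw [norm_mk (rd_append rT rB (J_sigma_sigma.mp j1)), List.length_append]

end ABAux

theorem abPair_norm_recursive_bound (n : ℕ) :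
    (abPair (n + 2)).2.norm ≤ 3 * (abPair (n + 1)).2.norm + 2 * (abPair n).2.norm := by
  open ABAux FreeGroup in
  cases n with
  | zero =>
    show (abPair 2).2.norm ≤ 3 * (abPair 1).2.norm + 2 * (abPair 0).2.norm
    have hInv2 := step_inv base_inv
    have e2 : abPair 2 =
        (FreeGroup.mk (stA T1 A1 B1 ++ FreeGroup.invRev A1),
          FreeGroup.mk (A1 ++ stB T1 A1 B1)) := by
      show (⁅(abPair 1).2⁻¹, (abPair 1).1⁆, ⁅(abPair 1).1, (abPair 1).2⁆) = _
      rw [base_rep]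
      exact Prod.ext (step_group_a T1 A1 B1) (step_group_b T1 A1 B1)
    have n0 : (abPair 0).2.norm = 1 := FreeGroup.norm_of 1
    have n1 : (abPair 1).2.norm = T1.length + B1.length := by
      rw [base_rep]; exact norm_b base_inv
    have n2 : (abPair 2).2.norm = A1.length + (stB T1 A1 B1).length := by
      rw [e2]; exact norm_b hInv2
    have l1 : T1.length = 1 ∧ A1.length = 3 ∧ B1.length = 3 := by decide
    have l2 : (stB T1 A1 B1).length = 11 := by decide
    omega
  | succ n =>
    obtain ⟨T, A, B, hInv, hrep⟩ := rep n
    have hInv2 := step_inv hInv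
    have hInv3 := step_inv hInv2
    have e2 : abPair (n + 2) =
        (FreeGroup.mk (stA T A B ++ FreeGroup.invRev A), FreeGroup.mk (A ++ stB T A B)) := by
      show (⁅(abPair (n+1)).2⁻¹, (abPair (n+1)).1⁆, ⁅(abPair (n+1)).1, (abPair (n+1)).2⁆) = _
      rw [hrep]
      exact Prod.ext (step_group_a T A B) (step_group_b T A B)
    have e3 : abPair (n + 3) = (FreeGroup.mk (stA A (stA T A B) (stB T A B) ++
          FreeGroup.invRev (stA T A B)),
        FreeGroup.mk (stA T A B ++ stB A (stA T A B) (stB T A B))) := by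
      show (⁅(abPair (n+2)).2⁻¹, (abPair (n+2)).1⁆, ⁅(abPair (n+2)).1, (abPair (n+2)).2⁆) = _
      rw [e2]
      exact Prod.ext (step_group_a A (stA T A B) (stB T A B))
        (step_group_b A (stA T A B) (stB T A B))
    have n1 : (abPair (n+1)).2.norm = T.length + B.length := by
      rw [hrep]; exact norm_b hInv
    have n2 : (abPair (n+2)).2.norm = A.length + (stB T A B).length := by
      rw [e2]; exact norm_b hInv2
    have n3 : (abPair (n+3)).2.norm = (stA T A B).length + (stB A (stA T A B) (stB T A B)).length := by
      rw [e3]; exact norm_b hInv3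
    have lA : (stA T A B).length = B.length + T.length + A.length + B.length + T.length := by
      simp only [stA, List.length_append, FreeGroup.invRev_length]
    have lB : (stB T A B).length = B.length + T.length + A.length + B.length + T.length := by
      simp only [stB, List.length_append, FreeGroup.invRev_length]
    have lB2 : (stB A (stA T A B) (stB T A B)).length =
        (stB T A B).length + A.length + (stA T A B).length + (stB T A B).length + A.length := by
      simp only [stB, List.length_append, FreeGroup.invRev_length]
    show (abPair (n+3)).2.norm ≤ 3 * (abPair (n+2)).2.norm + 2 * (abPair (n+1)).2.norm
    omega
end

section
/- For any element w of the free group F₂, if γ(w) = max{n : w ∈ γ_n(F₂)} and w ≠ e, then the girth function α satisfies α(γ(w)) ≤ ℓ(w); combined with γ(b_n) ≥ C(1+√2)^n and ℓ(b_n) ≤ C'((3+√17)/2)^n, this yields α(m) ≤ C''·m^ν for infinitely many m, where ν = (log₂(3+√17) − 1)/log₂(1+√2). -/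
open scoped commutatorElement

/-- `gam w = max {n : w ∈ γₙ(F₂)}`, paper indexing. -/
noncomputable def gam (w : FreeGroup (Fin 2)) : ℕ :=
  sSup {n : ℕ | 1 ≤ n ∧ w ∈ Subgroup.lowerCentralSeries (⊤ : Subgroup (FreeGroup (Fin 2))) (n - 1)}

/-- `α n` is the minimal length of a nontrivial element of `γₙ(F₂)` (paper indexing). -/
noncomputable def alphaGirth (n : ℕ) : ℕ :=
  sInf {k | ∃ w ∈ Subgroup.lowerCentralSeries (⊤ : Subgroup (FreeGroup (Fin 2))) (n - 1), w ≠ 1 ∧ w.norm = k}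

/-! ### Auxiliary general lemmas -/

section ThreeSub
variable {G : Type*} [Group G]

/-- Three subgroups lemma, `≤ N` version. -/
lemma aux_commutator_commutator_le_of_rotate {H₁ H₂ H₃ N : Subgroup G} [N.Normal]
    (h1 : ⁅⁅H₂, H₃⁆, H₁⁆ ≤ N) (h2 : ⁅⁅H₃, H₁⁆, H₂⁆ ≤ N) : ⁅⁅H₁, H₂⁆, H₃⁆ ≤ N := by
  let π := QuotientGroup.mk' N
  have key : ∀ {K₁ K₂ K₃ : Subgroup G},
      (⁅⁅K₁, K₂⁆, K₃⁆ ≤ N ↔ ⁅⁅K₁.map π, K₂.map π⁆, K₃.map π⁆ = ⊥) := by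
    intro K₁ K₂ K₃
    rw [← Subgroup.map_commutator, ← Subgroup.map_commutator, Subgroup.map_eq_bot_iff,
      QuotientGroup.ker_mk']
  rw [key]
  exact Subgroup.commutator_commutator_eq_bot_of_rotate (key.mp h1) (key.mp h2)

lemma aux_lcs_commutator_le (i j : ℕ) :
    ⁅Subgroup.lowerCentralSeries (⊤ : Subgroup G) i, Subgroup.lowerCentralSeries (⊤ : Subgroup G) j⁆ ≤ Subgroup.lowerCentralSeries (⊤ : Subgroup G) (i + j + 1) := by
  induction j generalizing i with
  | zero =>
      rw [lowerCentralSeries_zero]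
      exact le_of_eq rfl
  | succ j ih =>
      have h : Subgroup.lowerCentralSeries (⊤ : Subgroup G) (j+1) = ⁅Subgroup.lowerCentralSeries (⊤ : Subgroup G) j, (⊤ : Subgroup G)⁆ := rfl
      rw [h, Subgroup.commutator_comm]
      apply aux_commutator_commutator_le_of_rotate
      · rw [Subgroup.commutator_comm (⊤ : Subgroup G)]
        have h1 : (⁅Subgroup.lowerCentralSeries (⊤ : Subgroup G) i, (⊤:Subgroup G)⁆ : Subgroup G)
            = Subgroup.lowerCentralSeries (⊤ : Subgroup G) (i+1) := rfl
        rw [h1]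
        refine (ih (i+1)).trans (le_of_eq (by ring_nf))
      · have h2 : ⁅(⁅Subgroup.lowerCentralSeries (⊤ : Subgroup G) i, Subgroup.lowerCentralSeries (⊤ : Subgroup G) j⁆ : Subgroup G),
            (⊤:Subgroup G)⁆ ≤ ⁅Subgroup.lowerCentralSeries (⊤ : Subgroup G) (i+j+1), (⊤:Subgroup G)⁆ :=
          Subgroup.commutator_mono (ih i) le_rfl
        refine h2.trans (le_of_eq ?_)
        have h3 : (⁅Subgroup.lowerCentralSeries (⊤ : Subgroup G) (i+j+1), (⊤:Subgroup G)⁆ : Subgroup G)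
            = Subgroup.lowerCentralSeries (⊤ : Subgroup G) (i+j+2) := rfl
        rw [h3]; ring_nf

lemma aux_mem_lcs_commutator {i j : ℕ} {x y : G} (hx : x ∈ Subgroup.lowerCentralSeries (⊤ : Subgroup G) i)
    (hy : y ∈ Subgroup.lowerCentralSeries (⊤ : Subgroup G) j) : ⁅x, y⁆ ∈ Subgroup.lowerCentralSeries (⊤ : Subgroup G) (i + j + 1) :=
  aux_lcs_commutator_le i j (Subgroup.commutator_mem_commutator hx hy)
end ThreeSub

namespace WordAux
open FreeGroup List

variable {α : Type*} [DecidableEq α]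

/-- Non-cancelling adjacency. -/
def R (p q : α × Bool) : Prop := ¬(p.1 = q.1 ∧ p.2 = !q.2)

instance (p q : α × Bool) : Decidable (R p q) := by unfold R; infer_instance

/-- Flip a letter. -/
def ι (p : α × Bool) : α × Bool := (p.1, !p.2)

lemma reduce_eq_self_of_chain : ∀ {L : List (α × Bool)}, List.IsChain R L → reduce L = L := by
  intro L
  induction L with
  | nil => intro _; rfl
  | cons x L ih =>
    intro h
    rw [List.isChain_cons] at h
    obtain ⟨hhead, htail⟩ := h
    rw [FreeGroup.reduce.cons, ih htail]
    cases hL : L with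
    | nil => rfl
    | cons hd tl =>
      have : R x hd := hhead hd (by rw [hL]; rfl)
      simp only []
      rw [if_neg (by exact this)]

lemma not_chain'_extract : ∀ {L : List (α × Bool)}, ¬ List.IsChain R L →
    ∃ (L₂ : List (α × Bool)) (x : α) (b : Bool) (L₃ : List (α × Bool)),
      L = L₂ ++ (x, b) :: (x, !b) :: L₃ := by
  intro L
  induction L with
  | nil => intro h; exact absurd List.isChain_nil h
  | cons p L ih =>
    intro h
    cases L with
    | nil => exact absurd (List.isChain_singleton p) h
    | cons q L' =>
      rw [List.isChain_cons_cons] at h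
      by_cases hpq : R p q
      · have : ¬ List.IsChain R (q :: L') := fun hc => h ⟨hpq, hc⟩
        obtain ⟨L₂, x, b, L₃, hL⟩ := ih this
        exact ⟨p :: L₂, x, b, L₃, by rw [hL]; rfl⟩
      · unfold R at hpq
        push_neg at hpq
        obtain ⟨h1, h2⟩ := hpq
        refine ⟨[], p.1, p.2, L', ?_⟩
        have : q = (p.1, !p.2) := by
          cases q; cases p; simp_all
        rw [this]
        simp

lemma chain'_toWord (x : FreeGroup α) : List.IsChain R x.toWord := by
  by_contra h
  obtain ⟨L₂, y, b, L₃, hL⟩ := not_chain'_extract h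
  exact FreeGroup.reduce.not (L₁ := x.toWord) (by rw [FreeGroup.reduce_toWord, hL])

/-- The key junction lemma. -/
lemma toWord_mul (x y : FreeGroup α)
    (h : ∀ p ∈ x.toWord.getLast?, ∀ q ∈ y.toWord.head?, R p q) :
    (x * y).toWord = x.toWord ++ y.toWord := by
  conv_lhs => rw [← FreeGroup.mk_toWord (x := x), ← FreeGroup.mk_toWord (x := y)]
  rw [FreeGroup.mul_mk, FreeGroup.toWord_mk]
  exact reduce_eq_self_of_chain
    (List.isChain_append.mpr ⟨chain'_toWord x, chain'_toWord y, h⟩)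

lemma ne_one_of_head? {x : FreeGroup α} {p : α × Bool} (h : x.toWord.head? = some p) :
    x ≠ 1 := by
  intro hx
  rw [hx, FreeGroup.toWord_one] at h
  simp at h

lemma head?_toWord_inv {x : FreeGroup α} {p : α × Bool} (h : x.toWord.getLast? = some p) :
    x⁻¹.toWord.head? = some (ι p) := by
  rw [FreeGroup.toWord_inv, FreeGroup.invRev, List.head?_reverse, List.getLast?_map, h]
  rfl

lemma getLast?_toWord_inv {x : FreeGroup α} {p : α × Bool} (h : x.toWord.head? = some p) :
    x⁻¹.toWord.getLast? = some (ι p) := by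
  rw [FreeGroup.toWord_inv, FreeGroup.invRev, List.getLast?_reverse, List.head?_map, h]
  rfl

lemma head?_getLast?_mul {x y : FreeGroup α} {px qx py qy : α × Bool}
    (hx1 : x.toWord.head? = some px) (hx2 : x.toWord.getLast? = some qx)
    (hy1 : y.toWord.head? = some py) (hy2 : y.toWord.getLast? = some qy)
    (j : R qx py) :
    (x * y).toWord.head? = some px ∧ (x * y).toWord.getLast? = some qy := by
  have hw : (x * y).toWord = x.toWord ++ y.toWord := by
    apply toWord_mul
    intro p hp q hq
    rw [hx2, Option.mem_some_iff] at hp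
    rw [hy1, Option.mem_some_iff] at hq
    rw [hp, hq] at j
    exact j
  constructor
  · rw [hw]
    have : px ∈ (x.toWord ++ y.toWord).head? :=
      List.mem_head?_append_of_mem_head? (by rw [hx1]; exact rfl)
    exact this
  · rw [hw]
    have : qy ∈ (x.toWord ++ y.toWord).getLast? :=
      List.mem_getLast?_append_of_mem_getLast? (by rw [hy2]; exact rfl)
    exact this

end WordAux

/-! ### The sequences and their identities -/

namespace ABSeq
open WordAux

abbrev F2 := FreeGroup (Fin 2)

def aS (n : ℕ) : F2 := (abPair n).1
def bS (n : ℕ) : F2 := (abPair n).2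
def vS (n : ℕ) : F2 := bS (n+1) * bS n

lemma aS_succ (n : ℕ) : aS (n+1) = ⁅(bS n)⁻¹, aS n⁆ := rfl
lemma bS_succ (n : ℕ) : bS (n+1) = ⁅aS n, bS n⁆ := rfl

lemma hv (n : ℕ) : vS n = aS n * bS n * (aS n)⁻¹ := by
  rw [vS, bS_succ, commutatorElement_def]; group

lemma ha (n : ℕ) : aS (n+1) = (bS n)⁻¹ * vS n := by
  rw [aS_succ, commutatorElement_def, hv]; group

lemma hb (n : ℕ) : bS (n+1) = vS n * (bS n)⁻¹ := by
  rw [bS_succ, commutatorElement_def, hv]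

lemma hvrec (n : ℕ) :
    vS (n+1) = (((bS n)⁻¹ * (vS n * vS n)) * (bS n)⁻¹ * (vS n)⁻¹) * bS n := by
  rw [hv (n+1), ha n, hb n, hv n]; group

lemma hsrec (n : ℕ) :
    vS (n+1) * vS (n+1)
      = (((((bS n)⁻¹ * (vS n * vS n)) * (bS n)⁻¹ * vS n) * (bS n)⁻¹ * (vS n)⁻¹) * bS n) := by
  rw [hvrec n]; group

lemma ha' (n : ℕ) : aS (n+1) = (bS n)⁻¹ * bS (n+1) * bS n := by
  rw [ha n, hb n]; group

lemma hdep (n : ℕ) :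
    bS (n+2) = bS (n+1) * ⁅⁅(bS (n+1))⁻¹, (bS n)⁻¹⁆, bS (n+1)⁆ * (bS (n+1))⁻¹ := by
  rw [bS_succ (n+1), ha' n]
  simp only [commutatorElement_def]
  group

/-! ### Word structure invariant -/

open WordAux in
lemma word_step {t v : F2} {Ft Lt Fv Lv : Fin 2 × Bool}
    (ht1 : t.toWord.head? = some Ft) (ht2 : t.toWord.getLast? = some Lt)
    (hv1 : v.toWord.head? = some Fv) (hv2 : v.toWord.getLast? = some Lv)
    (hs1 : (v*v).toWord.head? = some Fv) (hs2 : (v*v).toWord.getLast? = some Lv)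
    (j1 : R (ι Ft) Fv) (j2 : R Lv (ι Lt)) (j3 : R (ι Ft) (ι Lv)) (j4 : R (ι Fv) Ft) :
    ((v * t⁻¹).toWord.head? = some Fv) ∧ ((v * t⁻¹).toWord.getLast? = some (ι Ft)) ∧
    (((t⁻¹ * (v * v)) * t⁻¹ * v⁻¹ * t).toWord.head? = some (ι Lt)) ∧
    (((t⁻¹ * (v * v)) * t⁻¹ * v⁻¹ * t).toWord.getLast? = some Lt) ∧
    (((((t⁻¹ * (v * v)) * t⁻¹ * v) * t⁻¹ * v⁻¹ * t)).toWord.head? = some (ι Lt)) ∧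
    (((((t⁻¹ * (v * v)) * t⁻¹ * v) * t⁻¹ * v⁻¹ * t)).toWord.getLast? = some Lt) := by
  have it1 : t⁻¹.toWord.head? = some (ι Lt) := head?_toWord_inv ht2
  have it2 : t⁻¹.toWord.getLast? = some (ι Ft) := getLast?_toWord_inv ht1
  have iv1 : v⁻¹.toWord.head? = some (ι Lv) := head?_toWord_inv hv2
  have iv2 : v⁻¹.toWord.getLast? = some (ι Fv) := getLast?_toWord_inv hv1
  obtain ⟨hT1, hT2⟩ := head?_getLast?_mul hv1 hv2 it1 it2 j2
  obtain ⟨hA1, hA2⟩ := head?_getLast?_mul it1 it2 hs1 hs2 j1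
  obtain ⟨hB1, hB2⟩ := head?_getLast?_mul hA1 hA2 it1 it2 j2
  obtain ⟨hC1, hC2⟩ := head?_getLast?_mul hB1 hB2 iv1 iv2 j3
  obtain ⟨hD1, hD2⟩ := head?_getLast?_mul hC1 hC2 ht1 ht2 j4
  obtain ⟨hE1, hE2⟩ := head?_getLast?_mul hB1 hB2 hv1 hv2 j1
  obtain ⟨hF1, hF2⟩ := head?_getLast?_mul hE1 hE2 it1 it2 j2
  obtain ⟨hG1, hG2⟩ := head?_getLast?_mul hF1 hF2 iv1 iv2 j3
  obtain ⟨hH1, hH2⟩ := head?_getLast?_mul hG1 hG2 ht1 ht2 j4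
  exact ⟨hT1, hT2, hD1, hD2, hH1, hH2⟩

def stOf (n : ℕ) : (Fin 2 × Bool) × (Fin 2 × Bool) × (Fin 2 × Bool) × (Fin 2 × Bool) :=
  if n % 3 = 0 then (((1:Fin 2),true),((1:Fin 2),true),((0:Fin 2),true),((0:Fin 2),false))
  else if n % 3 = 1 then (((0:Fin 2),true),((1:Fin 2),false),((1:Fin 2),false),((1:Fin 2),true))
  else (((1:Fin 2),false),((0:Fin 2),false),((1:Fin 2),true),((1:Fin 2),false))

def Inv (n : ℕ) : Prop :=
  (bS n).toWord.head? = some (stOf n).1 ∧ (bS n).toWord.getLast? = some (stOf n).2.1 ∧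
  (vS n).toWord.head? = some (stOf n).2.2.1 ∧ (vS n).toWord.getLast? = some (stOf n).2.2.2 ∧
  (vS n * vS n).toWord.head? = some (stOf n).2.2.1 ∧
  (vS n * vS n).toWord.getLast? = some (stOf n).2.2.2

lemma inv_zero : Inv 0 := by
  refine ⟨?_, ?_, ?_, ?_, ?_, ?_⟩ <;> decide

lemma inv_step (n : ℕ) (h : Inv n) : Inv (n+1) := by
  obtain ⟨h1, h2, h3, h4, h5, h6⟩ := h
  have hmod : n % 3 = 0 ∨ n % 3 = 1 ∨ n % 3 = 2 := by omega
  unfold Inv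
  rw [hb n, hsrec n, hvrec n]
  rcases hmod with hm | hm | hm
  · have hm' : (n+1) % 3 = 1 := by omega
    rw [stOf, hm] at h1 h2 h3 h4 h5 h6
    simp only [if_pos rfl] at h1 h2 h3 h4 h5 h6
    unfold stOf
    rw [hm']
    norm_num
    exact word_step h1 h2 h3 h4 h5 h6 (by decide) (by decide) (by decide) (by decide)
  · have hm' : (n+1) % 3 = 2 := by omega
    rw [stOf, hm] at h1 h2 h3 h4 h5 h6
    norm_num at h1 h2 h3 h4 h5 h6
    unfold stOf
    rw [hm']
    norm_num
    exact word_step h1 h2 h3 h4 h5 h6 (by decide) (by decide) (by decide) (by decide)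
  · have hm' : (n+1) % 3 = 0 := by omega
    rw [stOf, hm] at h1 h2 h3 h4 h5 h6
    norm_num at h1 h2 h3 h4 h5 h6
    unfold stOf
    rw [hm']
    norm_num
    exact word_step h1 h2 h3 h4 h5 h6 (by decide) (by decide) (by decide) (by decide)

lemma inv_all (n : ℕ) : Inv n := by
  induction n with
  | zero => exact inv_zero
  | succ n ih => exact inv_step n ih

lemma bS_ne_one (n : ℕ) : bS n ≠ 1 :=
  WordAux.ne_one_of_head? (inv_all n).1

/-! ### Norm bounds -/

def NGB : ℕ → ℕ × ℕ × ℕ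
  | 0 => (3, 4, 1)
  | n + 1 =>
      let p := NGB n
      (p.1 + p.2.1 + 3 * p.2.2, 2 * p.1 + p.2.1 + 4 * p.2.2, p.1 + p.2.2)

def VV (n : ℕ) : ℕ := (NGB n).1
def YY (n : ℕ) : ℕ := (NGB n).2.1
def LL (n : ℕ) : ℕ := (NGB n).2.2

lemma VV_succ (n : ℕ) : VV (n+1) = VV n + YY n + 3 * LL n := rfl
lemma YY_succ (n : ℕ) : YY (n+1) = 2 * VV n + YY n + 4 * LL n := rfl
lemma LL_succ (n : ℕ) : LL (n+1) = VV n + LL n := rfl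

open FreeGroup in
lemma norm_bounds (n : ℕ) :
    (vS n).norm ≤ VV n ∧ (vS n * vS n).norm ≤ YY n ∧ (bS n).norm ≤ LL n := by
  induction n with
  | zero =>
      refine ⟨?_, ?_, ?_⟩ <;> decide
  | succ n ih =>
      obtain ⟨ihv, ihs, ihb⟩ := ih
      have hbinv : (bS n)⁻¹.norm ≤ LL n := by rw [norm_inv_eq]; exact ihb
      have hvinv : (vS n)⁻¹.norm ≤ VV n := by rw [norm_inv_eq]; exact ihv
      refine ⟨?_, ?_, ?_⟩
      · rw [hvrec n, VV_succ]
        calc ((((bS n)⁻¹ * (vS n * vS n)) * (bS n)⁻¹ * (vS n)⁻¹) * bS n).norm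
            ≤ ((((bS n)⁻¹ * (vS n * vS n)) * (bS n)⁻¹ * (vS n)⁻¹)).norm + (bS n).norm :=
              norm_mul_le _ _
          _ ≤ (((bS n)⁻¹ * (vS n * vS n)) * (bS n)⁻¹).norm + (vS n)⁻¹.norm + (bS n).norm := by
              gcongr; exact norm_mul_le _ _
          _ ≤ ((bS n)⁻¹.norm + (vS n * vS n).norm) + (bS n)⁻¹.norm + (vS n)⁻¹.norm
                + (bS n).norm := by
              gcongr <;> first | exact norm_mul_le _ _ |
                (exact le_trans (norm_mul_le _ _) (by gcongr; exact norm_mul_le _ _))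
          _ ≤ (LL n + YY n) + LL n + VV n + LL n := by gcongr
          _ = VV n + YY n + 3 * LL n := by ring
      · rw [hsrec n, YY_succ]
        calc ((((((bS n)⁻¹ * (vS n * vS n)) * (bS n)⁻¹ * vS n) * (bS n)⁻¹ * (vS n)⁻¹) * bS n)).norm
            ≤ (((((bS n)⁻¹ * (vS n * vS n)) * (bS n)⁻¹ * vS n) * (bS n)⁻¹ * (vS n)⁻¹)).norm
              + (bS n).norm := norm_mul_le _ _
          _ ≤ ((((bS n)⁻¹ * (vS n * vS n)) * (bS n)⁻¹ * vS n) * (bS n)⁻¹).norm + (vS n)⁻¹.norm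
              + (bS n).norm := by gcongr; exact norm_mul_le _ _
          _ ≤ (((bS n)⁻¹ * (vS n * vS n)) * (bS n)⁻¹ * vS n).norm + (bS n)⁻¹.norm + (vS n)⁻¹.norm
              + (bS n).norm := by gcongr; exact norm_mul_le _ _
          _ ≤ (((bS n)⁻¹ * (vS n * vS n)) * (bS n)⁻¹).norm + (vS n).norm + (bS n)⁻¹.norm
              + (vS n)⁻¹.norm + (bS n).norm := by gcongr; exact norm_mul_le _ _
          _ ≤ ((bS n)⁻¹.norm + (vS n * vS n).norm) + (bS n)⁻¹.norm + (vS n).norm + (bS n)⁻¹.norm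
              + (vS n)⁻¹.norm + (bS n).norm := by
              gcongr
              exact le_trans (norm_mul_le _ _) (by gcongr; exact norm_mul_le _ _)
          _ ≤ (LL n + YY n) + LL n + VV n + LL n + VV n + LL n := by gcongr
          _ = 2 * VV n + YY n + 4 * LL n := by ring
      · rw [hb n, LL_succ]
        calc (vS n * (bS n)⁻¹).norm ≤ (vS n).norm + (bS n)⁻¹.norm := norm_mul_le _ _
          _ ≤ VV n + LL n := by gcongr

/-! ### Depth -/

def dS : ℕ → ℕ
  | 0 => 0
  | 1 => 1
  | n + 2 => 2 * dS (n+1) + dS n + 2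

lemma depth_mem : ∀ n : ℕ, bS n ∈ Subgroup.lowerCentralSeries (⊤ : Subgroup F2) (dS n) ∧
    bS (n+1) ∈ Subgroup.lowerCentralSeries (⊤ : Subgroup F2) (dS (n+1)) := by
  intro n
  induction n with
  | zero =>
      constructor
      · exact Subgroup.mem_top _
      · show bS 1 ∈ Subgroup.lowerCentralSeries (⊤ : Subgroup F2) 1
        rw [bS_succ]
        have := aux_mem_lcs_commutator (i := 0) (j := 0)
          (Subgroup.mem_top (aS 0)) (Subgroup.mem_top (bS 0))
        simpa using this
  | succ n ih =>
      obtain ⟨h0, h1⟩ := ih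
      refine ⟨h1, ?_⟩
      rw [hdep n]
      have hz : ⁅(bS (n+1))⁻¹, (bS n)⁻¹⁆ ∈ Subgroup.lowerCentralSeries (⊤ : Subgroup F2) (dS (n+1) + dS n + 1) :=
        aux_mem_lcs_commutator (Subgroup.inv_mem _ h1) (Subgroup.inv_mem _ h0)
      have hc : ⁅⁅(bS (n+1))⁻¹, (bS n)⁻¹⁆, bS (n+1)⁆
          ∈ Subgroup.lowerCentralSeries (⊤ : Subgroup F2) ((dS (n+1) + dS n + 1) + dS (n+1) + 1) :=
        aux_mem_lcs_commutator hz h1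
      have hidx : (dS (n+1) + dS n + 1) + dS (n+1) + 1 = dS (n+2) := by
        show _ = 2 * dS (n+1) + dS n + 2
        ring
      rw [hidx] at hc
      have hnormal : (Subgroup.lowerCentralSeries (⊤ : Subgroup F2) (dS (n+2))).Normal := by infer_instance
      have := hnormal.conj_mem _ hc (bS (n+1))
      simpa [mul_assoc] using this

lemma dS_lt_succ (n : ℕ) : dS n < dS (n+1) := by
  cases n with
  | zero => decide
  | succ n =>
      show dS (n+1) < 2 * dS (n+1) + dS n + 2
      omega

/-! ### Real growth estimates -/

noncomputable def lam : ℝ := (3 + Real.sqrt 17) / 2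
noncomputable def mu : ℝ := 1 + Real.sqrt 2

lemma s17_sq : Real.sqrt 17 ^ 2 = 17 := Real.sq_sqrt (by norm_num)
lemma s17_nonneg : 0 ≤ Real.sqrt 17 := Real.sqrt_nonneg 17
lemma s17_ge_three : 3 ≤ Real.sqrt 17 := by nlinarith [s17_sq, s17_nonneg]
lemma s2_sq : Real.sqrt 2 ^ 2 = 2 := Real.sq_sqrt (by norm_num)
lemma s2_nonneg : 0 ≤ Real.sqrt 2 := Real.sqrt_nonneg 2
lemma s2_ge_one : 1 ≤ Real.sqrt 2 := by nlinarith [s2_sq, s2_nonneg]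

lemma lam_pos : 0 < lam := by unfold lam; nlinarith [s17_nonneg]
lemma lam_gt_one : 1 < lam := by unfold lam; nlinarith [s17_ge_three]
lemma lam_sq : lam ^ 2 = 3 * lam + 2 := by
  unfold lam; nlinarith [s17_sq]
lemma mu_pos : 0 < mu := by unfold mu; nlinarith [s2_nonneg]
lemma mu_gt_one : 1 < mu := by unfold mu; nlinarith [s2_nonneg, s2_ge_one]
lemma mu_sq : mu ^ 2 = 2 * mu + 1 := by unfold mu; nlinarith [s2_sq]

lemma LL_growth (n : ℕ) :
    (VV n : ℝ) ≤ (3/2) * (lam - 1) * lam ^ n ∧ (YY n : ℝ) ≤ (3/2) * lam * lam ^ n ∧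
      (LL n : ℝ) ≤ (3/2) * lam ^ n := by
  induction n with
  | zero =>
      refine ⟨?_, ?_, ?_⟩ <;>
        · show _ ≤ _
          norm_num [VV, YY, LL, NGB]
          first
          | (unfold lam; nlinarith [s17_ge_three])
          | skip
  | succ n ih =>
      obtain ⟨ihv, ihy, ihl⟩ := ih
      have hp : (0:ℝ) < lam ^ n := pow_pos lam_pos n
      have hsucc : lam ^ (n+1) = lam * lam ^ n := by ring
      refine ⟨?_, ?_, ?_⟩
      · rw [VV_succ]; push_cast
        nlinarith [lam_sq, hp, ihv, ihy, ihl]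
      · rw [YY_succ]; push_cast
        nlinarith [lam_sq, hp, ihv, ihy, ihl]
      · rw [LL_succ]; push_cast
        nlinarith [lam_sq, hp, ihv, ihl]

noncomputable def cc : ℝ := 2 * Real.sqrt 2 - 2

lemma cc_pos : 0 < cc := by unfold cc; nlinarith [s2_sq, s2_nonneg]

lemma depth_growth : ∀ n : ℕ, cc * mu ^ n ≤ ((dS n : ℝ) + 1) ∧
    cc * mu ^ (n+1) ≤ ((dS (n+1) : ℝ) + 1) := by
  intro n
  induction n with
  | zero =>
      constructor
      · have h : (dS 0 : ℝ) = 0 := by norm_num [dS]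
        rw [h, pow_zero, mul_one]
        unfold cc; nlinarith [s2_sq, s2_nonneg]
      · have h : (dS 1 : ℝ) = 1 := by norm_num [dS]
        rw [zero_add, h, pow_one]
        unfold cc mu; nlinarith [s2_sq, s2_nonneg]
  | succ n ih =>
      obtain ⟨h0, h1⟩ := ih
      refine ⟨h1, ?_⟩
      have hd2 : dS (n+2) = 2 * dS (n+1) + dS n + 2 := rfl
      have hkey : cc * mu ^ (n+2) = 2 * (cc * mu ^ (n+1)) + cc * mu ^ n := by
        have h2 := mu_sq
        linear_combination (cc * mu ^ n) * h2
      rw [hkey, hd2]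
      push_cast
      linarith [h0, h1]

/-! ### The exponent -/

noncomputable def nu : ℝ := Real.log lam / Real.log mu

lemma log_mu_pos : 0 < Real.log mu := Real.log_pos mu_gt_one
lemma log_lam_pos : 0 < Real.log lam := Real.log_pos lam_gt_one
lemma nu_pos : 0 < nu := div_pos log_lam_pos log_mu_pos

lemma nu_eq :
    (Real.logb 2 (3 + Real.sqrt 17) - 1) / Real.logb 2 (1 + Real.sqrt 2) = nu := by
  have h2 : Real.log 2 ≠ 0 := ne_of_gt (Real.log_pos (by norm_num))
  have hmu : Real.log mu ≠ 0 := ne_of_gt log_mu_pos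
  have hlam' : Real.log lam = Real.log (3 + Real.sqrt 17) - Real.log 2 := by
    unfold lam
    rw [Real.log_div (by nlinarith [s17_nonneg]) (by norm_num)]
  unfold nu mu
  simp only [Real.logb]
  rw [hlam']
  field_simp

lemma mu_rpow_nu : mu ^ nu = lam := by
  rw [Real.rpow_def_of_pos mu_pos]
  have : Real.log mu * nu = Real.log lam := by
    unfold nu
    rw [mul_comm]
    exact div_mul_cancel₀ _ (ne_of_gt log_mu_pos)
  rw [this, Real.exp_log lam_pos]

/-! ### Part 1 helper -/

lemma mem_lcs_gam (w : FreeGroup (Fin 2)) :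
    w ∈ Subgroup.lowerCentralSeries (⊤ : Subgroup (FreeGroup (Fin 2))) (gam w - 1) := by
  set S : Set ℕ := {n : ℕ | 1 ≤ n ∧ w ∈ Subgroup.lowerCentralSeries (⊤ : Subgroup (FreeGroup (Fin 2))) (n - 1)} with hS
  by_cases hbdd : BddAbove S
  · have hne : S.Nonempty := ⟨1, le_refl 1, by simp⟩
    exact (Nat.sSup_mem hne hbdd).2
  · have : gam w = 0 := by
      rw [gam, ← hS, csSup_of_not_bddAbove hbdd, csSup_empty]
      rfl
    rw [this]
    simp

lemma alpha_le (n : ℕ) : alphaGirth (dS n + 1) ≤ LL n := by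
  have hwit : (bS n).norm ∈ {k | ∃ w ∈ Subgroup.lowerCentralSeries (⊤ : Subgroup (FreeGroup (Fin 2))) ((dS n + 1) - 1),
      w ≠ 1 ∧ w.norm = k} := ⟨bS n, by simpa using (depth_mem n).1, bS_ne_one n, rfl⟩
  exact le_trans (Nat.sInf_le hwit) (norm_bounds n).2.2

lemma key_chain (n : ℕ) :
    (alphaGirth (dS n + 1) : ℝ) ≤ ((3/2) * cc ^ (-nu)) * ((dS n + 1 : ℕ) : ℝ) ^ nu := by
  have h1 : (alphaGirth (dS n + 1) : ℝ) ≤ (3/2) * lam ^ n := by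
    refine le_trans ?_ (LL_growth n).2.2
    exact_mod_cast Nat.cast_le.mpr (alpha_le n)
  have hAB : cc ^ (-nu) * cc ^ nu = 1 := by
    rw [Real.rpow_neg (le_of_lt cc_pos)]
    exact inv_mul_cancel₀ (ne_of_gt (Real.rpow_pos_of_pos cc_pos nu))
  have h3 : ((mu ^ n : ℝ)) ^ nu = lam ^ n := by
    rw [← Real.rpow_natCast mu n, ← Real.rpow_mul (le_of_lt mu_pos),
      mul_comm ((n:ℝ)) nu, Real.rpow_mul (le_of_lt mu_pos), mu_rpow_nu, Real.rpow_natCast]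
  have h2 : (3/2 : ℝ) * lam ^ n = ((3/2) * cc ^ (-nu)) * (cc * mu ^ n) ^ nu := by
    rw [Real.mul_rpow (le_of_lt cc_pos) (le_of_lt (pow_pos mu_pos n)), h3,
      show ((3:ℝ)/2) * cc ^ (-nu) * (cc ^ nu * lam ^ n)
        = ((3:ℝ)/2) * ((cc ^ (-nu) * cc ^ nu) * lam ^ n) by ring, hAB, one_mul]
  have h4 : (cc * mu ^ n) ^ nu ≤ ((dS n + 1 : ℕ) : ℝ) ^ nu := by
    apply Real.rpow_le_rpow (le_of_lt (mul_pos cc_pos (pow_pos mu_pos n)))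
    · push_cast
      exact (depth_growth n).1
    · exact le_of_lt nu_pos
  calc (alphaGirth (dS n + 1) : ℝ) ≤ (3/2) * lam ^ n := h1
    _ = ((3/2) * cc ^ (-nu)) * (cc * mu ^ n) ^ nu := h2
    _ ≤ ((3/2) * cc ^ (-nu)) * ((dS n + 1 : ℕ) : ℝ) ^ nu := by
        apply mul_le_mul_of_nonneg_left h4
        exact le_of_lt (mul_pos (by norm_num) (Real.rpow_pos_of_pos cc_pos (-nu)))

end ABSeq

theorem alpha_polynomial_upper_bound :
    (∀ w : FreeGroup (Fin 2), w ≠ 1 → alphaGirth (gam w) ≤ w.norm) ∧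
    ∃ C'' > 0, {m : ℕ | (alphaGirth m : ℝ) ≤
      C'' * (m : ℝ) ^ ((Real.logb 2 (3 + Real.sqrt 17) - 1) / Real.logb 2 (1 + Real.sqrt 2))
      }.Infinite := by
  constructor
  · intro w hw
    exact Nat.sInf_le ⟨w, ABSeq.mem_lcs_gam w, hw, rfl⟩
  · refine ⟨(3/2) * ABSeq.cc ^ (-ABSeq.nu), ?_, ?_⟩
    · exact mul_pos (by norm_num) (Real.rpow_pos_of_pos ABSeq.cc_pos (-ABSeq.nu))
    · apply Set.infinite_of_injective_forall_mem (f := fun n : ℕ => ABSeq.dS n + 1)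
      · exact fun m n h => by
          have hmono : StrictMono (fun n : ℕ => ABSeq.dS n + 1) := by
            apply strictMono_nat_of_lt_succ
            intro n
            have := ABSeq.dS_lt_succ n
            omega
          exact hmono.injective h
      · intro n
        simp only [Set.mem_setOf_eq, ABSeq.nu_eq]
        exact_mod_cast ABSeq.key_chain n
end

section
/- For every n ∈ ℕ, girth(F₂^{(n)}) ≥ 3^n; i.e., every nontrivial element of the n-th derived subgroup of the free group on two generators has word length at least 3^n. -/
namespace GirthAux
open FreeGroup List

abbrev X := (Fin 2) × Bool

def invL (x : X) : X := (x.1, !x.2)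

@[simp] lemma invL_invL (x : X) : invL (invL x) = x := by simp [invL]

lemma invL_ne (x : X) : invL x ≠ x := by
  simp only [invL, ne_eq, Prod.ext_iff]
  rintro ⟨-, h⟩
  exact Bool.not_ne_self _ h

lemma eq_invL_comm {x y : X} : x = invL y ↔ y = invL x := by
  constructor <;> (rintro rfl; simp)

def IsRed (l : List X) : Prop := l.Chain' (fun a b => b ≠ invL a)

lemma isRed_nil : IsRed [] := List.isChain_nil

lemma IsRed.infix {l l' : List X} (h : IsRed l) (h' : l' <:+: l) : IsRed l' :=
  List.IsChain.infix h h'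

lemma isRed_reduce (l : List X) : IsRed (reduce l) := by
  induction l with
  | nil => exact isRed_nil
  | cons x l ih =>
    rw [reduce.cons]
    rcases h : reduce l with - | ⟨hd, tl⟩
    · exact List.isChain_singleton _
    · rw [h] at ih
      by_cases hc : x.1 = hd.1 ∧ x.2 = !hd.2
      · simp only [hc, if_true]
        exact ih.tail
      · simp only [hc, if_false]
        refine List.isChain_cons_cons.2 ⟨?_, ih⟩
        intro he
        rcases x with ⟨a, b⟩
        rcases hd with ⟨c, d⟩
        simp only [invL, Prod.ext_iff] at he
        exact hc ⟨he.1.symm, by simp [he.2]⟩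

lemma IsRed.reduce_eq {l : List X} (h : IsRed l) : reduce l = l := by
  induction l with
  | nil => rfl
  | cons x l ih =>
    have ht := ih h.tail
    rw [reduce.cons, ht]
    rcases l with - | ⟨hd, tl⟩
    · rfl
    · have hx : hd ≠ invL x := (List.isChain_cons_cons.1 h).1
      have hc : ¬(x.1 = hd.1 ∧ x.2 = !hd.2) := by
        rintro ⟨h1, h2⟩
        refine hx ?_
        rcases x with ⟨a,b⟩; rcases hd with ⟨c,d⟩
        simp only [invL, Prod.ext_iff] at h1 h2 ⊢
        exact ⟨h1.symm, by simp [h2]⟩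
      show (if x.1 = hd.1 ∧ x.2 = !hd.2 then tl else x :: hd :: tl) = x :: hd :: tl
      simp [hc]

lemma isRed_toWord (w : FreeGroup (Fin 2)) : IsRed (toWord w) := by
  have := isRed_reduce (toWord w)
  rwa [reduce_toWord] at this

lemma norm_mk_of_isRed {l : List X} (h : IsRed l) : (mk l).norm = l.length := by
  have : (mk l).toWord = l := by rw [toWord_mk, h.reduce_eq]
  rw [FreeGroup.norm, this]

lemma mk_ne_one_of_isRed {l : List X} (h : IsRed l) (hne : l ≠ []) : mk l ≠ 1 := by
  intro he
  have : (mk l).toWord = l := by rw [toWord_mk, h.reduce_eq]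
  rw [he, toWord_one] at this
  exact hne this.symm


section Count
variable (Λ : Subgroup (FreeGroup (Fin 2))) [Λ.Normal]

local notation "Q" => FreeGroup (Fin 2) ⧸ Λ

def piL : FreeGroup (Fin 2) →* FreeGroup (Fin 2) ⧸ Λ := QuotientGroup.mk' Λ

lemma piL_eq_one_iff {x : FreeGroup (Fin 2)} : piL Λ x = 1 ↔ x ∈ Λ := by
  rw [← MonoidHom.mem_ker, piL, QuotientGroup.ker_mk']

def rho (x : X) : Q := piL Λ (mk [x])

lemma rho_invL (x : X) : rho Λ (invL x) = (rho Λ x)⁻¹ := by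
  rw [rho, rho, ← _root_.map_inv, inv_mk]
  have h : invRev [x] = [invL x] := by rcases x with ⟨a,b⟩; simp [invRev, invL]
  rw [h]

def eod (q : Q) (x : X) : Q × Fin 2 := if x.2 then (q, x.1) else (q * rho Λ x, x.1)

def sgn (x : X) : ℤ := if x.2 then 1 else -1

noncomputable def stp (q : Q) (x : X) : (Q × Fin 2) → ℤ :=
  fun e => @ite _ (e = eod Λ q x) (Classical.propDecidable _) (sgn x) 0

lemma stp_apply (q : Q) (x : X) (e : (Q × Fin 2)) :
    stp Λ q x e = @ite _ (e = eod Λ q x) (Classical.propDecidable _) (sgn x) 0 :=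
  rfl

lemma rho_false (a : Fin 2) : rho Λ (a, false) = (rho Λ (a, true))⁻¹ := by
  have := rho_invL Λ (a, true)
  simpa [invL] using this

noncomputable def cnt : Q → List X → (Q × Fin 2) → ℤ
  | _, [] => 0
  | q, x :: l => stp Λ q x + cnt (q * rho Λ x) l

@[simp] lemma cnt_nil (q : Q) : cnt Λ q [] = 0 := rfl

lemma cnt_cons (q : Q) (x : X) (l : List X) :
    cnt Λ q (x :: l) = stp Λ q x + cnt Λ (q * rho Λ x) l := rfl

lemma piL_mk_cons (x : X) (l : List X) :
    piL Λ (mk (x :: l)) = rho Λ x * piL Λ (mk l) := by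
  rw [rho, ← _root_.map_mul, mul_mk]
  rfl

lemma cnt_append (q : Q) (l₁ l₂ : List X) :
    cnt Λ q (l₁ ++ l₂) = cnt Λ q l₁ + cnt Λ (q * piL Λ (mk l₁)) l₂ := by
  induction l₁ generalizing q with
  | nil =>
    have : piL Λ (mk ([] : List X)) = 1 := by
      show piL Λ 1 = 1; exact _root_.map_one _
    simp [this]
  | cons x l ih =>
    rw [List.cons_append, cnt_cons, cnt_cons, ih, piL_mk_cons, add_assoc, mul_assoc]

lemma stp_cancel (q : Q) (x : X) :
    stp Λ q x + stp Λ (q * rho Λ x) (invL x) = 0 := by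
  have he : eod Λ (q * rho Λ x) (invL x) = eod Λ q x := by
    rcases x with ⟨a, b⟩
    cases b
    · simp [eod, invL]
    · simp [eod, invL, rho_false, mul_assoc]
  have hs : sgn (invL x) = -sgn x := by
    rcases x with ⟨a, b⟩; cases b <;> simp [sgn, invL]
  funext e
  simp only [Pi.add_apply, stp_apply, he, hs, Pi.zero_apply]
  by_cases h : e = eod Λ q x <;> simp [h, he]

lemma piL_cancel (x : X) : rho Λ x * rho Λ (invL x) = 1 := by
  rw [rho_invL, mul_inv_cancel]

lemma cnt_step {l l' : List X} (h : Red.Step l l') (q : Q) : cnt Λ q l = cnt Λ q l' := by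
  cases h with
  | @not l₁ l₂ a b =>
    have hinv : (a, !b) = invL (a, b) := rfl
    have key : ∀ q' : FreeGroup (Fin 2) ⧸ Λ,
        cnt Λ q' ((a, b) :: (a, !b) :: l₂) = cnt Λ q' l₂ := by
      intro q'
      rw [cnt_cons, cnt_cons, ← add_assoc, hinv, stp_cancel,
        mul_assoc, piL_cancel, mul_one, zero_add]
    rw [cnt_append, cnt_append, key]

lemma cnt_red {l l' : List X} (h : Red l l') (q : Q) : cnt Λ q l = cnt Λ q l' := by
  induction h with
  | refl => rfl
  | tail _ h ih => rw [ih, cnt_step Λ h]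

noncomputable def Cw (q : Q) (w : FreeGroup (Fin 2)) : (Q × Fin 2) → ℤ := cnt Λ q (toWord w)

lemma Cw_one (q : Q) : Cw Λ q 1 = 0 := by rw [Cw, toWord_one]; rfl

lemma Cw_mul (q : Q) {x y : FreeGroup (Fin 2)} (hx : piL Λ x = 1) :
    Cw Λ q (x * y) = Cw Λ q x + Cw Λ q y := by
  have h1 : x * y = mk (toWord x ++ toWord y) := by rw [← mul_mk, mk_toWord, mk_toWord]
  have h2 : Red (toWord x ++ toWord y) (toWord (x * y)) := by
    rw [h1, toWord_mk]; exact reduce.red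
  rw [Cw, ← cnt_red Λ h2, cnt_append, Cw, Cw, mk_toWord, hx, mul_one]

lemma Cw_inv (q : Q) {x : FreeGroup (Fin 2)} (hx : piL Λ x = 1) :
    Cw Λ q x⁻¹ = -Cw Λ q x := by
  have h0 := Cw_mul Λ q (y := x⁻¹) hx
  rw [mul_inv_cancel, Cw_one] at h0
  funext e
  have := congrFun h0 e
  simp only [Pi.add_apply, Pi.zero_apply, Pi.neg_apply] at this ⊢
  linarith

lemma cw_eq_zero_of_mem_commutator {w : FreeGroup (Fin 2)} (hw : w ∈ ⁅Λ, Λ⁆) :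
    piL Λ w = 1 ∧ ∀ q : Q, Cw Λ q w = 0 := by
  let K : Subgroup (FreeGroup (Fin 2)) :=
    { carrier := {x | piL Λ x = 1 ∧ ∀ q : Q, Cw Λ q x = 0}
      one_mem' := ⟨map_one _, fun q => Cw_one Λ q⟩
      mul_mem' := by
        rintro x y ⟨hx1, hx2⟩ ⟨hy1, hy2⟩
        exact ⟨by rw [_root_.map_mul, hx1, hy1, mul_one],
          fun q => by rw [Cw_mul Λ q hx1, hx2, hy2, add_zero]⟩
      inv_mem' := by
        rintro x ⟨hx1, hx2⟩
        exact ⟨by rw [_root_.map_inv, hx1, inv_one],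
          fun q => by rw [Cw_inv Λ q hx1, hx2, neg_zero]⟩ }
  have hle : ⁅Λ, Λ⁆ ≤ K := by
    rw [Subgroup.commutator_le]
    intro g₁ h₁ g₂ h₂
    have hg₁ : piL Λ g₁ = 1 := (piL_eq_one_iff Λ).2 h₁
    have hg₂ : piL Λ g₂ = 1 := (piL_eq_one_iff Λ).2 h₂
    have hg₁' : piL Λ g₁⁻¹ = 1 := by rw [_root_.map_inv, hg₁, inv_one]
    have hg₂' : piL Λ g₂⁻¹ = 1 := by rw [_root_.map_inv, hg₂, inv_one]
    constructor
    · rw [commutatorElement_def, _root_.map_mul, _root_.map_mul, _root_.map_mul, hg₁, hg₂, hg₁', hg₂']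
      simp
    · intro q
      rw [commutatorElement_def, mul_assoc, mul_assoc, Cw_mul Λ q hg₁, Cw_mul Λ q hg₂,
        Cw_mul Λ q hg₁']
      rw [Cw_inv Λ q hg₁, Cw_inv Λ q hg₂]
      abel
  exact hle hw

end Count

-- ============ PART III chunk 1 ============
section Walk
variable (Λ : Subgroup (FreeGroup (Fin 2))) [Λ.Normal] (L : List X)

noncomputable def vtxN (i : ℕ) : FreeGroup (Fin 2) ⧸ Λ := piL Λ (mk (L.take i))
def ltrN (i : ℕ) : X := L.getD i default
noncomputable def eodN (i : ℕ) : (FreeGroup (Fin 2) ⧸ Λ) × Fin 2 := eod Λ (vtxN Λ L i) (ltrN L i)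

lemma piL_mk_nil : piL Λ (mk ([] : List X)) = 1 := by
  show piL Λ 1 = 1; exact _root_.map_one _

lemma cnt_eq_sum (q : FreeGroup (Fin 2) ⧸ Λ) (l : List X) (e) :
    cnt Λ q l e =
      ∑ i ∈ Finset.range l.length, stp Λ (q * piL Λ (mk (l.take i))) (l.getD i default) e := by
  induction l generalizing q with
  | nil => simp [cnt]
  | cons x l ih =>
    rw [List.length_cons, Finset.sum_range_succ', cnt_cons]
    have h0 : stp Λ (q * piL Λ (mk ((x :: l).take 0))) ((x :: l).getD 0 default) e
        = stp Λ q x e := by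
      rw [List.take_zero, piL_mk_nil, mul_one]; rfl
    have hsucc : ∀ i, stp Λ (q * piL Λ (mk ((x :: l).take (i+1)))) ((x :: l).getD (i+1) default) e
        = stp Λ ((q * rho Λ x) * piL Λ (mk (l.take i))) (l.getD i default) e := by
      intro i
      rw [List.take_succ_cons, piL_mk_cons, List.getD_cons_succ, ← mul_assoc]
    rw [h0]
    simp only [hsucc]
    rw [← ih (q * rho Λ x), Pi.add_apply, add_comm]

lemma sgn_cases (x : X) : sgn x = 1 ∨ sgn x = -1 := by
  rcases x with ⟨a, b⟩; cases b <;> simp [sgn]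

lemma exists_partner (hcnt : cnt Λ 1 L = 0) {i : ℕ} (hi : i < L.length) :
    ∃ j, j < L.length ∧ j ≠ i ∧ eodN Λ L j = eodN Λ L i ∧
      sgn (ltrN L j) = -sgn (ltrN L i) := by
  classical
  set e := eodN Λ L i with he
  have hsum : ∑ k ∈ Finset.range L.length, stp Λ (vtxN Λ L k) (ltrN L k) e = 0 := by
    have h1 := congrFun hcnt e
    rw [cnt_eq_sum] at h1
    simp only [one_mul, Pi.zero_apply] at h1
    exact h1
  by_contra hcon
  push_neg at hcon
  have hterm : ∀ k ∈ Finset.range L.length,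
      stp Λ (vtxN Λ L k) (ltrN L k) e =
        if eodN Λ L k = e then sgn (ltrN L i) else 0 := by
    intro k hk
    rw [Finset.mem_range] at hk
    have hstp : stp Λ (vtxN Λ L k) (ltrN L k) e
        = @ite _ (e = eodN Λ L k) (Classical.propDecidable _) (sgn (ltrN L k)) 0 := rfl
    rw [hstp]
    by_cases hek : eodN Λ L k = e
    · rw [if_pos hek.symm, if_pos hek]
      by_cases hki : k = i
      · rw [hki]
      · have hne := hcon k hk hki hek
        rcases sgn_cases (ltrN L k) with h1 | h1 <;>
          rcases sgn_cases (ltrN L i) with h2 | h2 <;> omega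
    · rw [if_neg (fun h => hek h.symm), if_neg hek]
  rw [Finset.sum_congr rfl hterm] at hsum
  rw [← Finset.sum_filter] at hsum
  rw [Finset.sum_const] at hsum
  have hmem : i ∈ Finset.filter (fun k => eodN Λ L k = e) (Finset.range L.length) := by
    simp [Finset.mem_filter, Finset.mem_range, hi, he]
  have hcard : 0 < (Finset.filter (fun k => eodN Λ L k = e) (Finset.range L.length)).card :=
    Finset.card_pos.2 ⟨i, hmem⟩
  rcases sgn_cases (ltrN L i) with h1 | h1 <;> rw [h1] at hsum <;> simp at hsum <;>
    exact hsum hi he.symm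

variable [NeZero L.length]

noncomputable def vtxZ (i : ZMod L.length) : FreeGroup (Fin 2) ⧸ Λ := vtxN Λ L i.val
def ltrZ (i : ZMod L.length) : X := ltrN L i.val

lemma natCast_val_self {n : ℕ} [NeZero n] (i : ZMod n) : ((i.val : ℕ) : ZMod n) = i :=
  ZMod.natCast_rightInverse i

lemma val_succ_mod (i : ZMod L.length) : (i + 1).val = (i.val + 1) % L.length := by
  conv_lhs => rw [← natCast_val_self i]
  rw [show ((i.val : ℕ) : ZMod L.length) + 1 = ((i.val + 1 : ℕ) : ZMod L.length) by push_cast; ring]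
  exact ZMod.val_natCast _ _

lemma take_succ_eq (k : ℕ) (hk : k < L.length) :
    L.take (k + 1) = L.take k ++ [L[k]] := by
  rw [List.take_succ, List.getElem?_eq_getElem hk]
  rfl

lemma vtxZ_step (hclosed : piL Λ (mk L) = 1) (i : ZMod L.length) :
    vtxZ Λ L (i + 1) = vtxZ Λ L i * rho Λ (ltrZ L i) := by
  have hval := val_succ_mod L i
  have hlt := ZMod.val_lt i
  have hkey : piL Λ (mk (L.take (i.val + 1))) = vtxZ Λ L i * rho Λ (ltrZ L i) := by
    rw [take_succ_eq L i.val hlt, ← mul_mk, _root_.map_mul]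
    congr 1
    rw [rho]
    congr 2
    rw [ltrZ, ltrN, List.getD_eq_getElem _ _ hlt]
  by_cases h : i.val + 1 < L.length
  · rw [vtxZ, hval, Nat.mod_eq_of_lt h, ← hkey]; rfl
  · have hn : i.val + 1 = L.length := by omega
    rw [vtxZ, hval, hn, Nat.mod_self]
    show piL Λ (mk (L.take 0)) = _
    rw [List.take_zero, piL_mk_nil, ← hkey, hn, List.take_length, hclosed]

lemma decode (hclosed : piL Λ (mk L) = 1) {i j : ZMod L.length}
    (he : eodN Λ L j.val = eodN Λ L i.val)
    (hs : sgn (ltrN L j.val) = -sgn (ltrN L i.val)) :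
    ltrZ L j = invL (ltrZ L i) ∧ vtxZ Λ L j = vtxZ Λ L (i + 1) ∧
      vtxZ Λ L (j + 1) = vtxZ Λ L i := by
  have hi := vtxZ_step Λ L hclosed i
  have hj := vtxZ_step Λ L hclosed j
  change eod Λ (vtxZ Λ L j) (ltrZ L j) = eod Λ (vtxZ Λ L i) (ltrZ L i) at he
  change sgn (ltrZ L j) = -sgn (ltrZ L i) at hs
  rcases hxi : ltrZ L i with ⟨a, b⟩
  rcases hxj : ltrZ L j with ⟨c, d⟩
  rw [hxi] at hi hs he
  rw [hxj] at hj hs he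
  cases b <;> cases d
  case false.false => simp [sgn] at hs
  case true.true => simp [sgn] at hs
  case false.true =>
    simp only [eod, Bool.false_eq_true, if_true, if_false, Prod.mk.injEq] at he
    obtain ⟨h1, h2⟩ := he
    subst h2
    refine ⟨by simp [invL], ?_, ?_⟩
    · rw [hi]; exact h1
    · rw [hj, h1, rho_false]; group
  case true.false =>
    simp only [eod, Bool.false_eq_true, if_true, if_false, Prod.mk.injEq] at he
    obtain ⟨h1, h2⟩ := he
    subst h2
    refine ⟨by simp [invL], ?_, ?_⟩
    · rw [hi, ← h1, rho_false]; group
    · rw [hj, ← h1]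


lemma val_sub_eq {n : ℕ} [NeZero n] (s t : ZMod n) :
    (t - s).val = (t.val + (n - s.val)) % n := by
  have hs := ZMod.val_lt s
  have h1 : t - s = ((t.val + (n - s.val) : ℕ) : ZMod n) := by
    push_cast [Nat.cast_sub (le_of_lt hs)]
    rw [natCast_val_self, natCast_val_self, ZMod.natCast_self]
    ring
  rw [h1, ZMod.val_natCast]

lemma zmod_val_inj {n : ℕ} [NeZero n] {x y : ZMod n} (h : x.val = y.val) : x = y := by
  rw [← natCast_val_self x, ← natCast_val_self y, h]

lemma key_girth {g : ℕ}
    (hgirth : ∀ x : FreeGroup (Fin 2), piL Λ x = 1 → x ≠ 1 → g ≤ x.norm)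
    (seg : List X) (h1 : IsRed seg) (h2 : seg ≠ []) (h3 : piL Λ (mk seg) = 1) :
    g ≤ seg.length := by
  have := hgirth (mk seg) h3 (mk_ne_one_of_isRed h1 h2)
  rwa [norm_mk_of_isRed h1] at this

lemma gap_lt {g : ℕ}
    (hred : IsRed L)
    (hgirth : ∀ x : FreeGroup (Fin 2), piL Λ x = 1 → x ≠ 1 → g ≤ x.norm)
    {s t : ZMod L.length} (hv : vtxZ Λ L s = vtxZ Λ L t) (hlt : s.val < t.val) :
    g ≤ t.val - s.val := by
  have htlt := ZMod.val_lt t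
  set seg := (L.take t.val).drop s.val with hseg
  have hsplit : L.take t.val = L.take s.val ++ seg := by
    conv_lhs => rw [← List.take_append_drop s.val (L.take t.val)]
    rw [List.take_take, min_eq_left (le_of_lt hlt)]
  have hlenseg : seg.length = t.val - s.val := by
    rw [hseg, List.length_drop, List.length_take, min_eq_left (le_of_lt htlt)]
  have hpiA : piL Λ (mk (L.take t.val)) = piL Λ (mk (L.take s.val)) * piL Λ (mk seg) := by
    rw [hsplit, ← mul_mk, _root_.map_mul]
  have hv' : piL Λ (mk (L.take s.val)) = piL Λ (mk (L.take t.val)) := hv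
  have hpiseg : piL Λ (mk seg) = 1 := by
    have h2 : piL Λ (mk (L.take s.val)) * piL Λ (mk seg) = piL Λ (mk (L.take s.val)) := by
      rw [← hpiA, hv']
    exact (mul_eq_left).mp h2
  have hredseg : IsRed seg :=
    hred.infix (((List.drop_suffix s.val _).isInfix).trans ((List.take_prefix t.val L).isInfix))
  have hne : seg ≠ [] := by
    intro h
    rw [h] at hlenseg
    simp at hlenseg
    omega
  have := key_girth Λ hgirth seg hredseg hne hpiseg
  omega

lemma gap_wrap {g : ℕ}
    (hred : IsRed L) (hclosed : piL Λ (mk L) = 1)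
    (hHL : ∀ x y : X, L.head? = some x → L.getLast? = some y → x ≠ invL y)
    (hgirth : ∀ x : FreeGroup (Fin 2), piL Λ x = 1 → x ≠ 1 → g ≤ x.norm)
    {s t : ZMod L.length} (hv : vtxZ Λ L s = vtxZ Λ L t) (hlt : t.val < s.val) :
    g ≤ t.val + (L.length - s.val) := by
  have hslt := ZMod.val_lt s
  have htlt := ZMod.val_lt t
  set seg := L.drop s.val ++ L.take t.val with hseg
  have hdne : L.drop s.val ≠ [] := by
    have : (L.drop s.val).length = L.length - s.val := List.length_drop
    intro h; rw [h] at this; simp at this; omega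
  have hpidrop : piL Λ (mk (L.drop s.val)) = (piL Λ (mk (L.take s.val)))⁻¹ := by
    have hsp : mk (L.take s.val) * mk (L.drop s.val) = mk L := by
      rw [mul_mk, List.take_append_drop]
    have h2 := congrArg (piL Λ) hsp
    rw [_root_.map_mul, hclosed] at h2
    exact (inv_eq_of_mul_eq_one_right h2).symm
  have hpiseg : piL Λ (mk seg) = 1 := by
    rw [hseg, ← mul_mk, _root_.map_mul, hpidrop,
      show piL Λ (mk (L.take t.val)) = piL Λ (mk (L.take s.val)) from hv.symm]
    exact inv_mul_cancel _
  have hredseg : IsRed seg := by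
    rw [IsRed]; refine List.isChain_append.2 ?_
    refine ⟨hred.infix (List.drop_suffix _ _).isInfix,
      hred.infix (List.take_prefix _ _).isInfix, ?_⟩
    intro x hx y hy
    have hxL : L.getLast? = some x := by
      conv_lhs => rw [← List.take_append_drop s.val L]
      rw [List.getLast?_append, Option.mem_def.mp hx]
      rfl
    have hyL : L.head? = some y := by
      conv_lhs => rw [← List.take_append_drop t.val L]
      rw [List.head?_append, Option.mem_def.mp hy]
      rfl
    exact hHL y x hyL hxL
  have hne : seg ≠ [] := by
    intro h
    rw [h] at hseg
    exact hdne (List.append_eq_nil_iff.mp hseg.symm).1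
  have hlenseg : seg.length = (L.length - s.val) + t.val := by
    rw [hseg, List.length_append, List.length_drop, List.length_take,
      min_eq_left (le_of_lt htlt)]
  have := key_girth Λ hgirth seg hredseg hne hpiseg
  omega

lemma no_three {g : ℕ}
    (hred : IsRed L) (hclosed : piL Λ (mk L) = 1)
    (hHL : ∀ x y : X, L.head? = some x → L.getLast? = some y → x ≠ invL y)
    (hgirth : ∀ x : FreeGroup (Fin 2), piL Λ x = 1 → x ≠ 1 → g ≤ x.norm)
    (hlen : L.length < 3 * g)
    {a b c : ZMod L.length} (hab : a ≠ b) (hbc : b ≠ c) (hac : a ≠ c)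
    (h1 : vtxZ Λ L a = vtxZ Λ L b) (h2 : vtxZ Λ L a = vtxZ Λ L c) : False := by
  have core : ∀ x y z : ZMod L.length,
      vtxZ Λ L x = vtxZ Λ L y → vtxZ Λ L y = vtxZ Λ L z →
      x.val < y.val → y.val < z.val → False := by
    intro x y z e1 e2 l1 l2
    have g1 := gap_lt Λ L hred hgirth e1 l1
    have g2 := gap_lt Λ L hred hgirth e2 l2
    have g3 := gap_wrap Λ L hred hclosed hHL hgirth
      (s := z) (t := x) (e1.trans e2).symm (lt_trans l1 l2)
    have := ZMod.val_lt z
    omega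
  have hvab : a.val ≠ b.val := fun h => hab (zmod_val_inj h)
  have hvbc : b.val ≠ c.val := fun h => hbc (zmod_val_inj h)
  have hvac : a.val ≠ c.val := fun h => hac (zmod_val_inj h)
  have ebc : vtxZ Λ L b = vtxZ Λ L c := h1.symm.trans h2
  rcases lt_trichotomy a.val b.val with hA | hA | hA
  · rcases lt_trichotomy b.val c.val with hB | hB | hB
    · exact core a b c h1 ebc hA hB
    · exact absurd hB hvbc
    · rcases lt_trichotomy a.val c.val with hC | hC | hC
      · exact core a c b h2 ebc.symm hC hB
      · exact absurd hC hvac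
      · exact core c a b h2.symm h1 hC hA
  · exact absurd hA hvab
  · rcases lt_trichotomy a.val c.val with hC | hC | hC
    · exact core b a c h1.symm h2 hA hC
    · exact absurd hC hvac
    · rcases lt_trichotomy b.val c.val with hB | hB | hB
      · exact core b c a ebc h2.symm hB hC
      · exact absurd hB hvbc
      · exact core c b a ebc.symm h1.symm hB hA


lemma ltrZ_eq_get (i : ZMod L.length) : ltrZ L i = L.get ⟨i.val, ZMod.val_lt i⟩ := by
  rw [ltrZ, ltrN, List.getD_eq_getElem _ _ (ZMod.val_lt i)]
  rfl

lemma walk_contra {g : ℕ}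
    (hred : IsRed L)
    (hHL : ∀ x y : X, L.head? = some x → L.getLast? = some y → x ≠ invL y)
    (hclosed : piL Λ (mk L) = 1)
    (hcnt : cnt Λ 1 L = 0)
    (hgirth : ∀ x : FreeGroup (Fin 2), piL Λ x = 1 → x ≠ 1 → g ≤ x.norm)
    (hlen : L.length < 3 * g) : False := by
  have hnpos : 0 < L.length := Nat.pos_of_ne_zero (NeZero.ne _)
  have hLne : L ≠ [] := by
    intro h; rw [h] at hnpos; simp at hnpos
  have hcyc : ∀ i : ZMod L.length, ltrZ L (i + 1) ≠ invL (ltrZ L i) := by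
    intro i
    have hlt := ZMod.val_lt i
    have hv1 := val_succ_mod L i
    rw [ltrZ_eq_get, ltrZ_eq_get]
    by_cases h : i.val + 1 < L.length
    · rw [Nat.mod_eq_of_lt h] at hv1
      have hchain := (List.isChain_iff_getElem.mp hred) i.val (by omega)
      intro hcontra
      apply hchain
      simp only [List.get_eq_getElem, hv1] at hcontra
      exact hcontra
    · have hend : i.val = L.length - 1 := by omega
      have h0 : (i + 1).val = 0 := by
        rw [hv1]; have : i.val + 1 = L.length := by omega
        rw [this, Nat.mod_self]
      intro hcontra
      refine hHL (L.get ⟨(i+1).val, ZMod.val_lt _⟩) (L.get ⟨i.val, ZMod.val_lt _⟩) ?_ ?_ hcontra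
      · have e1 : (⟨(i+1).val, ZMod.val_lt _⟩ : Fin L.length) = ⟨0, hnpos⟩ := Fin.ext h0
        rw [e1, List.head?_eq_head hLne]
        congr 1
        simp only [List.get_eq_getElem]
        exact (List.getElem_zero hnpos).symm
      · have e2 : (⟨i.val, ZMod.val_lt _⟩ : Fin L.length) = ⟨L.length - 1, by omega⟩ := by
          simp only [Fin.mk.injEq]; omega
        rw [e2, List.getLast?_eq_getLast hLne]
        congr 1
        rw [List.getLast_eq_getElem]
        simp only [List.get_eq_getElem]
  have hpart : ∀ i : ZMod L.length, ∃ j : ZMod L.length, j ≠ i ∧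
      eodN Λ L j.val = eodN Λ L i.val ∧ sgn (ltrN L j.val) = -sgn (ltrN L i.val) := by
    intro i
    obtain ⟨k, hk1, hk2, hk3, hk4⟩ := exists_partner Λ L hcnt (ZMod.val_lt i)
    have hv : ((k : ZMod L.length)).val = k := ZMod.val_cast_of_lt hk1
    refine ⟨(k : ZMod L.length), ?_, ?_, ?_⟩
    · intro h; exact hk2 (by rw [← hv, h])
    · rw [hv]; exact hk3
    · rw [hv]; exact hk4
  choose m hm1 hm2 hm3 using hpart
  have dec : ∀ i, ltrZ L (m i) = invL (ltrZ L i) ∧ vtxZ Λ L (m i) = vtxZ Λ L (i+1) ∧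
      vtxZ Λ L (m i + 1) = vtxZ Λ L i :=
    fun i => decode Λ L hclosed (hm2 i) (hm3 i)
  have hchain : ∀ i, m (i + 1) = m i - 1 := by
    intro i
    by_contra hne'
    have d1 := dec i
    have d2 := dec (i + 1)
    have h1 : m i ≠ i + 1 := by
      intro h
      have hx := d1.1
      rw [h] at hx
      exact hcyc i hx
    have h2 : m (i+1) + 1 ≠ i + 1 := by
      intro h
      have h' : m (i+1) = i := by
        have := add_right_cancel h
        exact this
      have hx := d2.1
      rw [h'] at hx
      exact hcyc i (eq_invL_comm.mp hx)
    have h3 : m i ≠ m (i+1) + 1 := by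
      intro h
      refine hne' ?_
      rw [h]
      ring
    exact no_three Λ L hred hclosed hHL hgirth hlen
      (a := i + 1) (b := m i) (c := m (i+1) + 1)
      (Ne.symm h1) h3 (Ne.symm h2) d1.2.1.symm d2.2.2.symm
  have hform : ∀ k : ℕ, m ((k : ℕ) : ZMod L.length) = m 0 - ((k : ℕ) : ZMod L.length) := by
    intro k
    induction k with
    | zero => simp
    | succ k ih =>
      have hcast : ((k+1 : ℕ) : ZMod L.length) = ((k : ℕ) : ZMod L.length) + 1 := by
        push_cast; ring
      rw [hcast, hchain, ih]
      ring
  have hformZ : ∀ i : ZMod L.length, m i = m 0 - i := by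
    intro i
    have := hform i.val
    rwa [natCast_val_self] at this
  have hm0 : m 0 = (((m 0).val : ℕ) : ZMod L.length) := (natCast_val_self _).symm
  rcases Nat.even_or_odd (m 0).val with ⟨i0, hi0⟩ | ⟨i0, hi0⟩
  · have hfix : m ((i0 : ℕ) : ZMod L.length) = ((i0 : ℕ) : ZMod L.length) := by
      rw [hformZ, hm0, hi0]
      push_cast
      ring
    exact hm1 _ hfix
  · have hmx : m ((i0+1 : ℕ) : ZMod L.length) = ((i0+1 : ℕ) : ZMod L.length) - 1 := by
      rw [hformZ, hm0, hi0]
      push_cast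
      ring
    have hx := (dec ((i0+1 : ℕ) : ZMod L.length)).1
    rw [hmx] at hx
    have hcyc' := hcyc ((((i0+1 : ℕ) : ZMod L.length)) - 1)
    rw [sub_add_cancel] at hcyc'
    exact hcyc' (eq_invL_comm.mp hx)

end Walk

lemma mk_invL (x : X) : FreeGroup.mk [invL x] = (FreeGroup.mk [x])⁻¹ := by
  rw [inv_mk]
  have h : invRev [x] = [invL x] := by rcases x with ⟨a,b⟩; simp [invRev, invL]
  rw [h]

lemma main_lemma (Λ : Subgroup (FreeGroup (Fin 2))) [Λ.Normal] (g : ℕ)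
    (hgirth : ∀ x ∈ Λ, x ≠ 1 → g ≤ FreeGroup.norm x) :
    ∀ w ∈ ⁅Λ, Λ⁆, w ≠ 1 → 3 * g ≤ FreeGroup.norm w := by
  have hgirth' : ∀ x : FreeGroup (Fin 2), piL Λ x = 1 → x ≠ 1 → g ≤ x.norm := fun x hx =>
    hgirth x ((piL_eq_one_iff Λ).mp hx)
  suffices H : ∀ N : ℕ, ∀ w ∈ ⁅Λ, Λ⁆, w ≠ 1 → FreeGroup.norm w ≤ N → 3 * g ≤ FreeGroup.norm w by
    intro w hw hne
    exact H (FreeGroup.norm w) w hw hne le_rfl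
  intro N
  induction N with
  | zero =>
    intro w hw hne h0
    exact absurd (norm_eq_zero.mp (Nat.le_zero.mp h0)) hne
  | succ N ih =>
    intro w hw hne hle
    have hred : IsRed (toWord w) := isRed_toWord w
    have hLne : toWord w ≠ [] := fun h => hne (toWord_eq_nil_iff.mp h)
    have hnorm : FreeGroup.norm w = (toWord w).length := rfl
    by_cases hcancel : ∃ (x : X) (K' : List X), toWord w = x :: (K' ++ [invL x])
    · obtain ⟨x, K', hdecomp⟩ := hcancel
      have hLform : toWord w = [x] ++ K' ++ [invL x] := by rw [hdecomp]; simp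
      have hw' : w = FreeGroup.mk [x] * FreeGroup.mk K' * (FreeGroup.mk [x])⁻¹ := by
        conv_lhs => rw [← mk_toWord (x := w), hLform]
        rw [← mul_mk, ← mul_mk, mk_invL]
      have hwmem : FreeGroup.mk K' ∈ ⁅Λ, Λ⁆ := by
        have hconj : FreeGroup.mk K' =
            (FreeGroup.mk [x])⁻¹ * w * ((FreeGroup.mk [x])⁻¹)⁻¹ := by
          rw [hw']; group
        have hnormal : (⁅Λ, Λ⁆ : Subgroup (FreeGroup (Fin 2))).Normal :=
          Subgroup.commutator_normal Λ Λ
        rw [hconj]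
        exact hnormal.conj_mem w hw _
      have hredK : IsRed K' := hred.infix ⟨[x], [invL x], hLform.symm⟩
      have hnormK : FreeGroup.norm (FreeGroup.mk K') = K'.length := norm_mk_of_isRed hredK
      have hKne : FreeGroup.mk K' ≠ 1 := by
        intro h1
        apply hne
        rw [hw', h1, mul_one, mul_inv_cancel]
      have hlen2 : K'.length + 2 = (toWord w).length := by
        rw [hLform]; simp
      have := ih (FreeGroup.mk K') hwmem hKne (by omega)
      omega
    · have hHL : ∀ x y : X, (toWord w).head? = some x → (toWord w).getLast? = some y →
          x ≠ invL y := by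
        intro x y hx hy hxy
        have hxh : x = (toWord w).head hLne := by
          rw [List.head?_eq_head hLne] at hx
          exact (Option.some.inj hx).symm
        have hyl : y = (toWord w).getLast hLne := by
          rw [List.getLast?_eq_getLast hLne] at hy
          exact (Option.some.inj hy).symm
        by_cases ht : (toWord w).tail = []
        · have hsing : toWord w = [(toWord w).head hLne] := by
            conv_lhs => rw [← List.cons_head_tail hLne, ht]
          have hgh : (toWord w).getLast? = (toWord w).head? := by
            rw [hsing]; simp
          have h3 : some y = some x := by rw [← hy, ← hx, hgh]
          have h4 := Option.some.inj h3
          rw [h4] at hxy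
          exact invL_ne x hxy.symm
        · apply hcancel
          have h1 : (toWord w).tail.dropLast ++ [(toWord w).tail.getLast ht] =
              (toWord w).tail := List.dropLast_append_getLast ht
          have h2 : (toWord w).tail.getLast ht = (toWord w).getLast hLne :=
            List.getLast_tail ht
          have hinv2 : invL x = (toWord w).tail.getLast ht := by
            rw [hxy, invL_invL, hyl]
            exact h2.symm
          refine ⟨x, (toWord w).tail.dropLast, ?_⟩
          rw [hinv2, h1, hxh]
          exact (List.cons_head_tail hLne).symm
      by_contra hlt
      push_neg at hlt
      obtain ⟨hpi, hcw⟩ := cw_eq_zero_of_mem_commutator Λ hw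
      haveI : NeZero (toWord w).length := ⟨fun h => hLne (List.length_eq_zero_iff.mp h)⟩
      exact walk_contra Λ (toWord w) hred hHL
        (by rw [mk_toWord]; exact hpi) (hcw 1) hgirth' (by omega)

end GirthAux

theorem girth_derivedSeries (n : ℕ) (w : FreeGroup (Fin 2))
    (hw : w ∈ derivedSeries (FreeGroup (Fin 2)) n) (hne : w ≠ 1) :
    3 ^ n ≤ w.norm := by
  induction n generalizing w with
  | zero =>
    have h : w.norm ≠ 0 := fun h => hne (FreeGroup.norm_eq_zero.mp h)
    simpa using Nat.one_le_iff_ne_zero.mpr h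
  | succ n ih =>
    haveI : (derivedSeries (FreeGroup (Fin 2)) n).Normal := derivedSeries_normal _ _
    have hmain := GirthAux.main_lemma (derivedSeries (FreeGroup (Fin 2)) n) (3 ^ n)
      (fun x hx hxne => ih x hx hxne) w (by rw [← derivedSeries_succ]; exact hw) hne
    calc 3 ^ (n + 1) = 3 * 3 ^ n := by ring
    _ ≤ w.norm := hmain
end
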